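/- arXiv:1912.04343 — 3 statements merged into one kernel-verified Lean document; each statement's English description precedes it below -/
import Mathlib

section
/- Let φ, ψ be of class P, let p : ℝ≥0 → ℝ≥0 be locally integrable, and let S ⊂ Γ be uniformly incrementally bounded (UIB). Then the comparison system is strongly GUAS uniformly over S if and only if it is weakly GUAS uniformly over S. -/
open Set Filter MeasureTheory

noncomputable section

/-- An impulse-time sequence, modeled as a subset of `(0,∞)` whose intersection with any
half-line `(-∞, t]` is finite (equivalently: a strictly increasing, finite or infinite,
sequence of positive reals with no finite limit point). -/
def IsImpulseSeq (γ : Set ℝ) : Prop :=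
  γ ⊆ Set.Ioi (0 : ℝ) ∧ ∀ t : ℝ, (γ ∩ Set.Iic t).Finite

/-- `impCnt γ s t` is the number `n^γ_{(s,t]}` of impulse times in the interval `(s, t]`. -/
def impCnt (γ : Set ℝ) (s t : ℝ) : ℕ := (γ ∩ Set.Ioc s t).ncard

/-- The class `Sup(ρ)` of impulse-time sequences whose impulse frequency is eventually
uniformly upper bounded by `ρ`. -/
def MemSup (ρ : ℝ) (γ : Set ℝ) : Prop :=
  IsImpulseSeq γ ∧ ∀ ε : ℝ, 0 < ε → ∃ T : ℝ, 0 < T ∧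
    ∀ t : ℝ, T ≤ t → ∀ s : ℝ, 0 ≤ s → (impCnt γ s (s + t) : ℝ) / t ≤ ρ + ε

/-- The class `Sdn(ρ)` of impulse-time sequences whose impulse frequency is eventually
uniformly lower bounded by `ρ`. -/
def MemSdn (ρ : ℝ) (γ : Set ℝ) : Prop :=
  IsImpulseSeq γ ∧ ∀ ε : ℝ, 0 < ε → ∃ T : ℝ, 0 < T ∧
    ∀ t : ℝ, T ≤ t → ∀ s : ℝ, 0 ≤ s → ρ - ε ≤ (impCnt γ s (s + t) : ℝ) / t

/-- `S` is a uniform subset of `Sup(ρ)`: the time `T` can be chosen independently of `γ ∈ S`. -/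
def USubSup (ρ : ℝ) (S : Set (Set ℝ)) : Prop :=
  (∀ γ ∈ S, IsImpulseSeq γ) ∧ ∀ ε : ℝ, 0 < ε → ∃ T : ℝ, 0 < T ∧
    ∀ γ ∈ S, ∀ t : ℝ, T ≤ t → ∀ s : ℝ, 0 ≤ s → (impCnt γ s (s + t) : ℝ) / t ≤ ρ + ε

/-- `S` is a uniform subset of `Sdn(ρ)`: the time `T` can be chosen independently of `γ ∈ S`. -/
def USubSdn (ρ : ℝ) (S : Set (Set ℝ)) : Prop :=
  (∀ γ ∈ S, IsImpulseSeq γ) ∧ ∀ ε : ℝ, 0 < ε → ∃ T : ℝ, 0 < T ∧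
    ∀ γ ∈ S, ∀ t : ℝ, T ≤ t → ∀ s : ℝ, 0 ≤ s → ρ - ε ≤ (impCnt γ s (s + t) : ℝ) / t

/-- The average dwell-time class `Sad(n, τ)`. -/
def MemSad (n : ℕ) (τ : ℝ) (γ : Set ℝ) : Prop :=
  IsImpulseSeq γ ∧ ∀ s t : ℝ, 0 ≤ s → s ≤ t → (impCnt γ s t : ℝ) ≤ (n : ℝ) + (t - s) / τ

/-- The reverse average dwell-time class `Srad(n, τ)`. -/
def MemSrad (n : ℕ) (τ : ℝ) (γ : Set ℝ) : Prop :=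
  IsImpulseSeq γ ∧ ∀ s t : ℝ, 0 ≤ s → s ≤ t → -(n : ℝ) + (t - s) / τ ≤ (impCnt γ s t : ℝ)

/-- A function of class `P`: continuous on `[0,∞)`, zero at zero, and positive on `(0,∞)`. -/
def ClassP (α : ℝ → ℝ) : Prop :=
  ContinuousOn α (Set.Ici 0) ∧ α 0 = 0 ∧ ∀ s : ℝ, 0 < s → 0 < α s

/-- `p : [0,∞) → [0,∞)` is nonnegative and locally (Lebesgue) integrable. -/
def LocIntNN (p : ℝ → ℝ) : Prop :=
  (∀ s : ℝ, 0 ≤ p s) ∧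
    ∀ a b : ℝ, 0 ≤ a → a ≤ b → IntervalIntegrable p MeasureTheory.volume a b

/-- A function of class `KL`: continuous on `[0,∞)×[0,∞)`, nonnegative there, for each fixed
`t ≥ 0` strictly increasing in the first argument with value `0` at `0`, for each fixed
`r ≥ 0` strictly decreasing in the second argument whenever positive, and tending to `0` as
the second argument tends to `∞`. -/
def ClassKL (β : ℝ → ℝ → ℝ) : Prop :=
  ContinuousOn (fun q : ℝ × ℝ => β q.1 q.2) (Set.Ici 0 ×ˢ Set.Ici 0) ∧
  (∀ r t : ℝ, 0 ≤ r → 0 ≤ t → 0 ≤ β r t) ∧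
  (∀ t : ℝ, 0 ≤ t → StrictMonoOn (fun r => β r t) (Set.Ici 0) ∧ β 0 t = 0) ∧
  (∀ r : ℝ, 0 ≤ r → ∀ t1 t2 : ℝ, 0 ≤ t1 → t1 < t2 → 0 < β r t1 → β r t2 < β r t1) ∧
  (∀ r : ℝ, 0 ≤ r → Filter.Tendsto (fun t => β r t) Filter.atTop (nhds 0))

/-- `z : [t0, T) → [0,∞)` is a solution of the comparison system
`ż(t) ∈ (−∞, −p(t)φ(z(t))]` for `t ∉ γ`, `z(t) ∈ [0, ψ(z(t⁻))]` for `t ∈ γ`,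
with `z(t0) = z0` (the right endpoint `T` is an extended real, `T = ⊤` meaning a
solution defined on all of `[t0,∞)`).  Between impulse times `z` is continuous, and its
local absolute continuity together with `z' ≤ −p·φ∘z` a.e. is encoded by the integral
inequality `z(b) − z(a) ≤ −∫_a^b p(s)φ(z(s)) ds` on impulse-free subintervals;
at each impulse time in `(t0, T)` the left limit exists and the jump condition holds. -/
structure IsCompSol (p φ ψ : ℝ → ℝ) (γ : Set ℝ) (t0 : ℝ) (T : EReal) (z0 : ℝ)
    (z : ℝ → ℝ) : Prop where
  dom : (t0 : EReal) < T
  init : z t0 = z0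
  nonneg : ∀ t : ℝ, t0 ≤ t → (t : EReal) < T → 0 ≤ z t
  flow_cont : ∀ a b : ℝ, t0 ≤ a → a ≤ b → (b : EReal) < T → γ ∩ Set.Ioc a b = ∅ →
    ContinuousOn z (Set.Icc a b)
  flow_int : ∀ a b : ℝ, t0 ≤ a → a ≤ b → (b : EReal) < T → γ ∩ Set.Ioc a b = ∅ →
    IntervalIntegrable (fun s => p s * φ (z s)) MeasureTheory.volume a b ∧
      z b - z a ≤ - ∫ s in a..b, p s * φ (z s)
  jump : ∀ τ ∈ γ, t0 < τ → (τ : EReal) < T →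
    ∃ L : ℝ, Filter.Tendsto z (nhdsWithin τ (Set.Iio τ)) (nhds L) ∧ z τ ≤ ψ L

/-- The comparison system is weakly GUAS uniformly over the family `S` of impulse-time
sequences. -/
def WeakGUAS (p φ ψ : ℝ → ℝ) (S : Set (Set ℝ)) : Prop :=
  ∃ β : ℝ → ℝ → ℝ, ClassKL β ∧
    ∀ γ ∈ S, ∀ t0 : ℝ, 0 ≤ t0 → ∀ z0 : ℝ, 0 ≤ z0 → ∀ (T : EReal) (z : ℝ → ℝ),
      IsCompSol p φ ψ γ t0 T z0 z →
        ∀ t : ℝ, t0 ≤ t → (t : EReal) < T → z t ≤ β z0 (t - t0)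

/-- The comparison system is strongly GUAS uniformly over the family `S` of impulse-time
sequences (the decay also counts the number of impulses). -/
def StrongGUAS (p φ ψ : ℝ → ℝ) (S : Set (Set ℝ)) : Prop :=
  ∃ β : ℝ → ℝ → ℝ, ClassKL β ∧
    ∀ γ ∈ S, ∀ t0 : ℝ, 0 ≤ t0 → ∀ z0 : ℝ, 0 ≤ z0 → ∀ (T : EReal) (z : ℝ → ℝ),
      IsCompSol p φ ψ γ t0 T z0 z →
        ∀ t : ℝ, t0 ≤ t → (t : EReal) < T →
          z t ≤ β z0 (t - t0 + (impCnt γ t0 t : ℝ))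

/-- `S` is uniformly incrementally bounded (UIB). -/
def UIB (S : Set (Set ℝ)) : Prop :=
  ∃ φ₀ : ℝ → ℝ, ContinuousOn φ₀ (Set.Ioi 0) ∧ MonotoneOn φ₀ (Set.Ioi 0) ∧
    ∀ γ ∈ S, ∀ s t : ℝ, 0 ≤ s → s < t → (impCnt γ s t : ℝ) ≤ φ₀ (t - s)

/-- `M = sup_{a > 0} ∫_a^{ψ(a)} ds/φ(s)`. -/
def Mval (φ ψ : ℝ → ℝ) : ℝ :=
  sSup {y : ℝ | ∃ a : ℝ, 0 < a ∧ y = ∫ s in a..(ψ a), 1 / φ s}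

/-- `N = inf_{t ≥ 0} ∫_t^{t+θ} p(s) ds`. -/
def Nval (p : ℝ → ℝ) (θ : ℝ) : ℝ :=
  sInf {y : ℝ | ∃ t : ℝ, 0 ≤ t ∧ y = ∫ s in t..(t + θ), p s}

lemma classKL_antitone {β : ℝ → ℝ → ℝ} (hβ : ClassKL β) {r : ℝ} (hr : 0 ≤ r)
    {t1 t2 : ℝ} (h1 : 0 ≤ t1) (h12 : t1 ≤ t2) : β r t2 ≤ β r t1 := by
  rcases eq_or_lt_of_le hr with hr0 | hr0
  · rw [← hr0, (hβ.2.2.1 t1 h1).2, (hβ.2.2.1 t2 (h1.trans h12)).2]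
  · rcases eq_or_lt_of_le h12 with h | h
    · rw [h]
    · have hpos : 0 < β r t1 := by
        have := (hβ.2.2.1 t1 h1).1 (Set.self_mem_Ici) (Set.mem_Ici.2 hr) hr0
        simpa [(hβ.2.2.1 t1 h1).2] using this
      exact (hβ.2.2.2.1 r hr t1 t2 h1 h hpos).le

/-- generalized inverse of `u ↦ u + max (φ₀ u) 0`, extended by identity on `(-∞,0]`. -/
def ginv (φ₀ : ℝ → ℝ) (s : ℝ) : ℝ :=
  if s ≤ 0 then s else sInf {u : ℝ | 0 < u ∧ s ≤ u + max (φ₀ u) 0}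

section ginv

variable {φ₀ : ℝ → ℝ} (hm : MonotoneOn φ₀ (Set.Ioi 0))

lemma g_mono (hm : MonotoneOn φ₀ (Set.Ioi 0)) {u v : ℝ} (hu : 0 < u) (huv : u < v) :
    u + max (φ₀ u) 0 < v + max (φ₀ v) 0 := by
  have : max (φ₀ u) 0 ≤ max (φ₀ v) 0 :=
    max_le_max (hm hu (hu.trans huv) huv.le) le_rfl
  linarith

lemma g_self_le {u : ℝ} : u ≤ u + max (φ₀ u) 0 := by
  have := le_max_right (φ₀ u) 0; linarith

lemma ginv_set_nonempty {s : ℝ} :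
    {u : ℝ | 0 < u ∧ s ≤ u + max (φ₀ u) 0}.Nonempty := by
  refine ⟨max s 1, lt_of_lt_of_le one_pos (le_max_right _ _), ?_⟩
  exact le_trans (le_max_left s 1) g_self_le

lemma ginv_set_bddBelow {s : ℝ} :
    BddBelow {u : ℝ | 0 < u ∧ s ≤ u + max (φ₀ u) 0} :=
  ⟨0, fun u hu => hu.1.le⟩

lemma ginv_nonneg {s : ℝ} (hs : 0 ≤ s) : 0 ≤ ginv φ₀ s := by
  unfold ginv
  split_ifs with h
  · exact hs
  · exact le_csInf ginv_set_nonempty (fun u hu => hu.1.le)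

lemma ginv_le {u s : ℝ} (hu : 0 < u) (hs : s ≤ u + max (φ₀ u) 0) :
    ginv φ₀ s ≤ u := by
  unfold ginv
  split_ifs with h
  · linarith
  · exact csInf_le ginv_set_bddBelow ⟨hu, hs⟩

lemma ginv_monotone (hm : MonotoneOn φ₀ (Set.Ioi 0)) : Monotone (ginv φ₀) := by
  intro s s' hss'
  unfold ginv
  split_ifs with h1 h2 h2
  · exact hss'
  · calc s ≤ 0 := h1
      _ ≤ _ := le_csInf ginv_set_nonempty (fun u hu => hu.1.le)
  · linarith
  · exact csInf_le_csInf ginv_set_bddBelow ginv_set_nonempty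
      (fun u hu => ⟨hu.1, hss'.trans hu.2⟩)

lemma ginv_surjective (hm : MonotoneOn φ₀ (Set.Ioi 0)) :
    Function.Surjective (ginv φ₀) := by
  intro y
  rcases le_or_gt y 0 with hy | hy
  · exact ⟨y, by simp [ginv, hy]⟩
  · refine ⟨y + max (φ₀ y) 0, ?_⟩
    have hgy : 0 < y + max (φ₀ y) 0 := lt_of_lt_of_le hy g_self_le
    rw [ginv, if_neg (not_le.2 hgy)]
    refine le_antisymm (csInf_le ginv_set_bddBelow ⟨hy, le_rfl⟩) ?_
    refine le_csInf ginv_set_nonempty (fun u hu => ?_)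
    by_contra hlt
    push_neg at hlt
    exact absurd hu.2 (not_le.2 (g_mono hm hu.1 hlt))

lemma ginv_continuous (hm : MonotoneOn φ₀ (Set.Ioi 0)) : Continuous (ginv φ₀) :=
  (ginv_monotone hm).continuous_of_surjective (ginv_surjective hm)

lemma ginv_tendsto (hm : MonotoneOn φ₀ (Set.Ioi 0)) :
    Tendsto (ginv φ₀) atTop atTop := by
  rw [tendsto_atTop]
  intro b
  set M := max b 1 with hM
  have hM0 : 0 < M := lt_of_lt_of_le one_pos (le_max_right _ _)
  filter_upwards [eventually_gt_atTop (M + max (φ₀ M) 0)] with s hs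
  have hs0 : 0 < s := lt_of_le_of_lt (lt_of_lt_of_le hM0 g_self_le).le hs
  rw [ginv, if_neg (not_le.2 hs0)]
  refine le_trans (le_max_left b 1) (le_csInf ginv_set_nonempty fun u hu => ?_)
  by_contra hlt
  push_neg at hlt
  have : u + max (φ₀ u) 0 < M + max (φ₀ M) 0 := g_mono hm hu.1 hlt
  linarith [hu.2]

end ginv

lemma classKL_pos {β : ℝ → ℝ → ℝ} (hβ : ClassKL β) {r t : ℝ} (hr : 0 < r)
    (ht : 0 ≤ t) : 0 < β r t := by
  have := (hβ.2.2.1 t ht).1 (Set.self_mem_Ici) (Set.mem_Ici.2 hr.le) hr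
  simpa [(hβ.2.2.1 t ht).2] using this

lemma impCnt_self (γ : Set ℝ) (t : ℝ) : impCnt γ t t = 0 := by
  simp [impCnt]

/-- Lemma 2: if `φ, ψ` are of class `P`, `p` is nonnegative and locally integrable and
`S ⊆ Γ` is UIB, then the comparison system is strongly GUAS uniformly over `S` if and only
if it is weakly GUAS uniformly over `S`. -/
theorem strongGUAS_iff_weakGUAS (φ ψ p : ℝ → ℝ) (hφ : ClassP φ) (hψ : ClassP ψ)
    (hp : LocIntNN p) (S : Set (Set ℝ)) (hS : ∀ γ ∈ S, IsImpulseSeq γ) (hUIB : UIB S) :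
    StrongGUAS p φ ψ S ↔ WeakGUAS p φ ψ S := by
  constructor
  · rintro ⟨β, hβ, hb⟩
    refine ⟨β, hβ, fun γ hγ t0 ht0 z0 hz0 T z hsol t ht htT => ?_⟩
    refine (hb γ hγ t0 ht0 z0 hz0 T z hsol t ht htT).trans ?_
    exact classKL_antitone hβ hz0 (by linarith)
      (by have : (0:ℝ) ≤ (impCnt γ t0 t : ℝ) := Nat.cast_nonneg _; linarith)
  · rintro ⟨β, hβ, hb⟩
    obtain ⟨φ₀, hφc, hφm, hφb⟩ := hUIB
    set h : ℝ → ℝ := ginv φ₀ with hh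
    refine ⟨fun r s => β r (h s) + r * Real.exp (-s), ?_, ?_⟩
    · refine ⟨?_, ?_, ?_, ?_, ?_⟩
      · -- continuity
        refine ContinuousOn.add ?_ ?_
        · refine hβ.1.comp
            (Continuous.continuousOn
              (continuous_fst.prodMk
                (((ginv_continuous hφm).comp continuous_snd : Continuous fun q : ℝ × ℝ => h q.2)))) ?_
          rintro ⟨r, s⟩ hq
          exact ⟨hq.1, ginv_nonneg hq.2⟩
        · exact (continuous_fst.mul
            (Real.continuous_exp.comp continuous_snd.neg)).continuousOn
      · intro r t hr ht
        have h1 : 0 ≤ β r (h t) := hβ.2.1 r (h t) hr (ginv_nonneg ht)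
        have h2 : 0 ≤ r * Real.exp (-t) := mul_nonneg hr (Real.exp_pos _).le
        show 0 ≤ β r (h t) + r * Real.exp (-t)
        linarith
      · intro t ht
        constructor
        · intro r1 h1 r2 h2 h12
          have hb1 : β r1 (h t) < β r2 (h t) :=
            (hβ.2.2.1 (h t) (ginv_nonneg ht)).1 h1 h2 h12
          have hb2 : r1 * Real.exp (-t) < r2 * Real.exp (-t) :=
            mul_lt_mul_of_pos_right h12 (Real.exp_pos _)
          dsimp only
          linarith
        · simp [(hβ.2.2.1 (h t) (ginv_nonneg ht)).2]
      · intro r hr t1 t2 ht1 h12 hpos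
        rcases eq_or_lt_of_le hr with hr0 | hr0
        · exfalso
          rw [← hr0] at hpos
          simp [(hβ.2.2.1 (h t1) (ginv_nonneg ht1)).2] at hpos
        · have hb1 : β r (h t2) ≤ β r (h t1) :=
            classKL_antitone hβ hr (ginv_nonneg ht1) (ginv_monotone hφm h12.le)
          have hb2 : r * Real.exp (-t2) < r * Real.exp (-t1) :=
            mul_lt_mul_of_pos_left (Real.exp_lt_exp.2 (by linarith)) hr0
          show β r (h t2) + r * Real.exp (-t2) < β r (h t1) + r * Real.exp (-t1)
          linarith
      · intro r hr
        have h1 : Tendsto (fun t => β r (h t)) atTop (nhds 0) :=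
          (hβ.2.2.2.2 r hr).comp (ginv_tendsto hφm)
        have h2 : Tendsto (fun t => r * Real.exp (-t)) atTop (nhds 0) := by
          have := (Real.tendsto_exp_atBot).comp tendsto_neg_atTop_atBot
          simpa using (this.const_mul r)
        simpa using h1.add h2
    · intro γ hγ t0 ht0 z0 hz0 T z hsol t ht htT
      rcases eq_or_lt_of_le ht with h0 | h0
      · -- t = t0
        rw [← h0, impCnt_self]
        show z t0 ≤ β z0 (h (t0 - t0 + ((0:ℕ):ℝ))) + z0 * Real.exp (-(t0 - t0 + ((0:ℕ):ℝ)))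
        have e1 : t0 - t0 + ((0:ℕ):ℝ) = 0 := by norm_num
        rw [e1, hsol.init]
        have e2 : h (0:ℝ) = 0 := by simp [hh, ginv]
        rw [e2]
        have hbpos : 0 ≤ β z0 0 := hβ.2.1 z0 0 hz0 le_rfl
        rw [neg_zero, Real.exp_zero, mul_one]
        linarith
      · -- t0 < t
        set n : ℝ := (impCnt γ t0 t : ℝ) with hn
        have hn0 : 0 ≤ n := Nat.cast_nonneg _
        have hcnt : n ≤ φ₀ (t - t0) := hφb γ hγ t0 t ht0 h0
        have hcnt' : t - t0 + n ≤ (t - t0) + max (φ₀ (t - t0)) 0 := by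
          have := le_max_left (φ₀ (t - t0)) 0
          linarith
        have hkey : h (t - t0 + n) ≤ t - t0 := ginv_le (by linarith) hcnt'
        have hweak : z t ≤ β z0 (t - t0) := hb γ hγ t0 ht0 z0 hz0 T z hsol t ht htT
        have hmono : β z0 (t - t0) ≤ β z0 (h (t - t0 + n)) :=
          classKL_antitone hβ hz0 (ginv_nonneg (by linarith)) hkey
        have hexp : 0 ≤ z0 * Real.exp (-(t - t0 + n)) :=
          mul_nonneg hz0 (Real.exp_pos _).le
        show z t ≤ β z0 (h (t - t0 + n)) + z0 * Real.exp (-(t - t0 + n))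
        linarith
end
end

section
/- Let ψ, φ be of class P, let p : ℝ≥0 → ℝ≥0 be locally integrable, and let θ > 0 be such that M := sup_{a>0} ∫_a^{ψ(a)} ds/φ(s) < inf_{t≥0} ∫_t^{t+θ} p(s) ds =: N. If M > 0, then the comparison system is strongly GUAS uniformly over any S ⊂ Γ that is a uniform subset of Sup(1/θ). -/
open Set Filter MeasureTheory

noncomputable section

namespace P1

variable {φ : ℝ → ℝ} (hφ : ClassP φ)

/-- The Lyapunov density `1/φ` is continuous on `(0,∞)`. -/
lemma inv_cont (hφ : ClassP φ) : ContinuousOn (fun s => 1 / φ s) (Set.Ioi 0) := by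
  apply ContinuousOn.div continuousOn_const
  · exact hφ.1.mono (fun x hx => Set.mem_Ici.mpr (le_of_lt (Set.mem_Ioi.mp hx)))
  · exact fun x hx => ne_of_gt (hφ.2.2 x hx)

lemma inv_intable (hφ : ClassP φ) {a b : ℝ} (ha : 0 < a) (hb : 0 < b) :
    IntervalIntegrable (fun s => 1 / φ s) volume a b := by
  apply ContinuousOn.intervalIntegrable
  apply (inv_cont hφ).mono
  intro x hx
  exact lt_of_lt_of_le (lt_min ha hb) hx.1

/-- `V r = ∫_1^r ds/φ(s)`. -/
def V (φ : ℝ → ℝ) (r : ℝ) : ℝ := ∫ s in (1:ℝ)..r, 1 / φ s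

lemma V_sub (hφ : ClassP φ) {a b : ℝ} (ha : 0 < a) (hb : 0 < b) :
    V φ b - V φ a = ∫ s in a..b, 1 / φ s := by
  have h1 : IntervalIntegrable (fun s => 1 / φ s) volume 1 b := inv_intable hφ one_pos hb
  have h2 : IntervalIntegrable (fun s => 1 / φ s) volume 1 a := inv_intable hφ one_pos ha
  rw [V, V, intervalIntegral.integral_interval_sub_left h1 h2]


lemma V_strictMono (hφ : ClassP φ) : StrictMonoOn (V φ) (Set.Ioi 0) := by
  intro a ha b hb hab
  have h : 0 < V φ b - V φ a := by
    rw [V_sub hφ ha hb]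
    apply intervalIntegral.intervalIntegral_pos_of_pos_on (inv_intable hφ ha hb)
    · intro x hx
      have hx0 : 0 < x := lt_trans ha hx.1
      exact div_pos one_pos (hφ.2.2 x hx0)
    · exact hab
  linarith

lemma V_mono (hφ : ClassP φ) {a b : ℝ} (ha : 0 < a) (hab : a ≤ b) : V φ a ≤ V φ b := by
  rcases eq_or_lt_of_le hab with h | h
  · rw [h]
  · exact le_of_lt (V_strictMono hφ ha (lt_of_lt_of_le ha hab) h)

lemma V_lt_iff (hφ : ClassP φ) {a b : ℝ} (ha : 0 < a) (hb : 0 < b) :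
    V φ a < V φ b ↔ a < b := by
  constructor
  · intro h
    by_contra hc
    push_neg at hc
    exact absurd (V_mono hφ hb hc) (not_le_of_gt h)
  · exact fun h => V_strictMono hφ ha hb h

lemma V_le_iff (hφ : ClassP φ) {a b : ℝ} (ha : 0 < a) (hb : 0 < b) :
    V φ a ≤ V φ b ↔ a ≤ b := by
  constructor
  · intro h
    by_contra hc
    push_neg at hc
    exact absurd (V_strictMono hφ hb ha hc) (not_lt_of_ge h)
  · intro h; exact V_mono hφ ha h

lemma V_continuousAt (hφ : ClassP φ) {x : ℝ} (hx : 0 < x) : ContinuousAt (V φ) x := by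
  have hco : ContinuousAt (fun s => 1 / φ s) x := by
    have := (inv_cont hφ).continuousAt (Ioi_mem_nhds hx : Set.Ioi (0:ℝ) ∈ nhds x)
    exact this
  have hd : HasDerivAt (V φ) (1 / φ x) x := by
    apply intervalIntegral.integral_hasDerivAt_right (inv_intable hφ one_pos hx)
    · exact ⟨_, Ioi_mem_nhds hx, ((inv_cont hφ).aestronglyMeasurable measurableSet_Ioi)⟩
    · exact hco
  exact hd.continuousAt

lemma V_continuousOn (hφ : ClassP φ) : ContinuousOn (V φ) (Set.Ioi 0) :=
  fun x hx => (V_continuousAt hφ hx).continuousWithinAt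


/-- Sublevel set of `V`. -/
def Vset (φ : ℝ → ℝ) (y : ℝ) : Set ℝ := {x | x = 0 ∨ (0 < x ∧ V φ x ≤ y)}

/-- Generalized inverse of `V`, extended by `0` below the range. -/
def Vinv (φ : ℝ → ℝ) (y : ℝ) : ℝ := sSup (Vset φ y)

lemma Vset_nonempty (φ : ℝ → ℝ) (y : ℝ) : (Vset φ y).Nonempty := ⟨0, Or.inl rfl⟩

lemma Vset_bdd (hφ : ClassP φ) {y c : ℝ} (hc : 0 < c) (hyc : y ≤ V φ c) :
    BddAbove (Vset φ y) := by
  refine ⟨c, fun x hx => ?_⟩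
  rcases hx with h | ⟨hx0, hxy⟩
  · exact h ▸ le_of_lt hc
  · exact (V_le_iff hφ hx0 hc).mp (le_trans hxy hyc)

lemma Vinv_nonneg (hφ : ClassP φ) {y c : ℝ} (hc : 0 < c) (hyc : y ≤ V φ c) :
    0 ≤ Vinv φ y :=
  le_csSup (Vset_bdd hφ hc hyc) (Or.inl rfl)

lemma Vinv_le (hφ : ClassP φ) {y c : ℝ} (hc : 0 < c) (hyc : y ≤ V φ c) :
    Vinv φ y ≤ c := by
  apply csSup_le (Vset_nonempty φ y)
  intro x hx
  rcases hx with h | ⟨hx0, hxy⟩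
  · exact h ▸ le_of_lt hc
  · exact (V_le_iff hφ hx0 hc).mp (le_trans hxy hyc)

lemma le_Vinv (hφ : ClassP φ) {y x c : ℝ} (hx : 0 < x) (hxy : V φ x ≤ y)
    (hc : 0 < c) (hyc : y ≤ V φ c) : x ≤ Vinv φ y :=
  le_csSup (Vset_bdd hφ hc hyc) (Or.inr ⟨hx, hxy⟩)

lemma Vinv_mono (hφ : ClassP φ) {y1 y2 c : ℝ} (h12 : y1 ≤ y2) (hc : 0 < c)
    (hyc : y2 ≤ V φ c) : Vinv φ y1 ≤ Vinv φ y2 := by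
  apply csSup_le_csSup (Vset_bdd hφ hc hyc) (Vset_nonempty φ y1)
  intro x hx
  rcases hx with h | ⟨hx0, hxy⟩
  · exact Or.inl h
  · exact Or.inr ⟨hx0, le_trans hxy h12⟩

lemma Vinv_continuousAt (hφ : ClassP φ) {y0 : ℝ} (h : ∃ c, 0 < c ∧ y0 < V φ c) :
    ContinuousAt (Vinv φ) y0 := by
  obtain ⟨c, hc, hyc⟩ := h
  have hycle : y0 ≤ V φ c := le_of_lt hyc
  set x0 := Vinv φ y0 with hx0def
  have hx0nn : 0 ≤ x0 := Vinv_nonneg hφ hc hycle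
  rw [ContinuousAt, Metric.tendsto_nhds]
  intro ε hε
  rcases eq_or_lt_of_le hx0nn with hx00 | hx0pos
  · -- Vinv y0 = 0
    have hkey : ∀ a : ℝ, 0 < a → y0 < V φ a := by
      intro a ha
      by_contra hcon
      push_neg at hcon
      have := le_Vinv hφ ha hcon hc hycle
      rw [← hx0def, ← hx00] at this
      exact absurd this (not_le_of_gt ha)
    set a := min (ε/2) c with hadef
    have ha : 0 < a := lt_min (half_pos hε) hc
    have hU : Set.Iio (V φ a) ∈ nhds y0 := Iio_mem_nhds (hkey a ha)
    filter_upwards [hU] with y hy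
    have h1 : Vinv φ y ≤ a := Vinv_le hφ ha (le_of_lt hy)
    have h2 : 0 ≤ Vinv φ y := Vinv_nonneg hφ ha (le_of_lt hy)
    rw [Real.dist_eq, ← hx0def, ← hx00, sub_zero, abs_of_nonneg h2]
    have : a ≤ ε/2 := min_le_left _ _
    linarith
  · -- Vinv y0 = x0 > 0
    have hVx0 : V φ x0 ≤ y0 := by
      by_contra hcon
      push_neg at hcon
      -- find x1 < x0 positive with y0 < V x1
      have hev : ∀ᶠ x in nhdsWithin x0 (Set.Iio x0), y0 < V φ x ∧ 0 < x := by
        apply Filter.Eventually.and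
        · exact eventually_nhdsWithin_of_eventually_nhds
            ((V_continuousAt hφ hx0pos).eventually (eventually_gt_nhds hcon))
        · exact eventually_nhdsWithin_of_eventually_nhds (eventually_gt_nhds hx0pos)
      obtain ⟨x1, ⟨hx1y, hx1pos⟩, hx1lt⟩ :
          ∃ x1, (y0 < V φ x1 ∧ 0 < x1) ∧ x1 < x0 := by
        obtain ⟨x1, hm, hp⟩ := (hev.and self_mem_nhdsWithin).exists
        exact ⟨x1, hm, hp⟩
      have : x0 ≤ x1 := by
        apply csSup_le (Vset_nonempty φ y0)
        intro x hx
        rcases hx with hh | ⟨hxp, hxy⟩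
        · exact hh ▸ le_of_lt hx1pos
        · exact le_of_lt ((V_lt_iff hφ hxp hx1pos).mp (lt_of_le_of_lt hxy hx1y))
      exact absurd this (not_le_of_gt hx1lt)
    set e := min (ε/2) (x0/2) with hedef
    have he : 0 < e := lt_min (half_pos hε) (half_pos hx0pos)
    have helt : e < x0 := lt_of_le_of_lt (min_le_right _ _) (by linarith)
    have hupper : y0 < V φ (x0 + e) := by
      by_contra hcon
      push_neg at hcon
      have := le_Vinv hφ (by linarith) hcon hc hycle
      rw [← hx0def] at this
      linarith
    have hlower : V φ (x0 - e) < y0 :=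
      lt_of_lt_of_le (V_strictMono hφ (by linarith : (0:ℝ) < x0 - e) hx0pos (by linarith)) hVx0
    have hU : Set.Ioo (V φ (x0 - e)) (V φ (x0 + e)) ∈ nhds y0 :=
      Ioo_mem_nhds hlower hupper
    filter_upwards [hU] with y hy
    have h1 : Vinv φ y ≤ x0 + e := Vinv_le hφ (by linarith) (le_of_lt hy.2)
    have h2 : x0 - e ≤ Vinv φ y :=
      le_Vinv hφ (by linarith) (le_of_lt hy.1) (by linarith) (le_of_lt hy.2)
    rw [Real.dist_eq, ← hx0def]
    have hee : e ≤ ε/2 := min_le_left _ _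
    rw [abs_lt]
    constructor <;> linarith

lemma Vinv_tendsto_atBot (hφ : ClassP φ) : Filter.Tendsto (Vinv φ) Filter.atBot (nhds 0) := by
  rw [Metric.tendsto_nhds]
  intro ε hε
  filter_upwards [Filter.eventually_le_atBot (V φ (min (ε/2) 1))] with y hy
  have hm : 0 < min (ε/2) 1 := lt_min (half_pos hε) one_pos
  have h1 : Vinv φ y ≤ min (ε/2) 1 := Vinv_le hφ hm hy
  have h2 : 0 ≤ Vinv φ y := Vinv_nonneg hφ hm hy
  rw [Real.dist_eq, sub_zero, abs_of_nonneg h2]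
  exact lt_of_le_of_lt h1 (lt_of_le_of_lt (min_le_left _ _) (by linarith))


/-- Envelope of the jump map: `Ψ r = max r (sup ψ on [0,r])`. -/
def Psi (ψ : ℝ → ℝ) (r : ℝ) : ℝ := max (max r 0) (sSup (ψ '' Set.Icc 0 (max r 0)))

variable {ψ : ℝ → ℝ}

lemma Psi_img_ne (r : ℝ) : (ψ '' Set.Icc 0 (max r 0)).Nonempty :=
  ⟨ψ 0, Set.mem_image_of_mem ψ (Set.left_mem_Icc.mpr (le_max_right r 0))⟩

lemma Psi_img_bdd (hψ : ClassP ψ) (r : ℝ) : BddAbove (ψ '' Set.Icc 0 (max r 0)) :=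
  (isCompact_Icc.image_of_continuousOn
    (hψ.1.mono (fun x hx => hx.1))).bddAbove

lemma le_Psi (r : ℝ) : r ≤ Psi ψ r := le_trans (le_max_left r 0) (le_max_left _ _)

lemma Psi_nonneg (r : ℝ) : 0 ≤ Psi ψ r := le_trans (le_max_right r 0) (le_max_left _ _)

lemma psi_le_Psi (hψ : ClassP ψ) {a c : ℝ} (ha : 0 ≤ a) (hac : a ≤ c) :
    ψ a ≤ Psi ψ c := by
  refine le_trans (le_csSup (Psi_img_bdd hψ c) ?_) (le_max_right _ _)
  exact Set.mem_image_of_mem ψ ⟨ha, le_trans hac (le_max_left c 0)⟩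

lemma Psi_mono (hψ : ClassP ψ) : Monotone (Psi ψ) := by
  intro a b hab
  apply max_le_max (max_le_max hab le_rfl)
  apply csSup_le_csSup (Psi_img_bdd hψ b) (Psi_img_ne a)
  exact Set.image_mono (Set.Icc_subset_Icc le_rfl (max_le_max hab le_rfl))

lemma Psi_iter_mono (hψ : ClassP ψ) (n : ℕ) : Monotone ((Psi ψ)^[n]) :=
  (Psi_mono hψ).iterate n

lemma le_Psi_iter (n : ℕ) (r : ℝ) : r ≤ (Psi ψ)^[n] r := by
  induction n with
  | zero => simp
  | succ k ih =>
    rw [Function.iterate_succ_apply']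
    exact le_trans ih (le_Psi _)

lemma Psi_iter_le_iter (hψ : ClassP ψ) {m n : ℕ} (hmn : m ≤ n) (r : ℝ) :
    (Psi ψ)^[m] r ≤ (Psi ψ)^[n] r := by
  obtain ⟨k, rfl⟩ := Nat.exists_eq_add_of_le hmn
  rw [Nat.add_comm, Function.iterate_add_apply]
  exact le_Psi_iter k _

lemma Psi_iter_nonneg (n : ℕ) (r : ℝ) (hr : 0 ≤ r) : 0 ≤ (Psi ψ)^[n] r :=
  le_trans hr (le_Psi_iter n r)

lemma Psi_small (hψ : ClassP ψ) : ∀ ε : ℝ, 0 < ε → ∃ δ : ℝ, 0 < δ ∧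
    ∀ r : ℝ, 0 ≤ r → r ≤ δ → Psi ψ r ≤ ε := by
  intro ε hε
  have hc : ContinuousWithinAt ψ (Set.Ici 0) 0 := hψ.1 0 Set.self_mem_Ici
  rw [ContinuousWithinAt, hψ.2.1, Metric.tendsto_nhdsWithin_nhds] at hc
  obtain ⟨δ, hδ, hδp⟩ := hc (ε/2) (half_pos hε)
  refine ⟨min (δ/2) (ε/2), lt_min (half_pos hδ) (half_pos hε), fun r hr hrδ => ?_⟩
  have h1 : max r 0 = r := max_eq_left hr
  apply max_le
  · rw [h1]
    exact le_trans hrδ (le_trans (min_le_right _ _) (by linarith))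
  · apply csSup_le (Psi_img_ne r)
    intro y hy
    obtain ⟨x, hx, rfl⟩ := hy
    rw [h1] at hx
    have hxd : dist x 0 < δ := by
      rw [Real.dist_eq, sub_zero, abs_of_nonneg hx.1]
      exact lt_of_le_of_lt (le_trans hx.2 (le_trans hrδ (min_le_left _ _))) (by linarith)
    have := hδp hx.1 hxd
    rw [Real.dist_eq, sub_zero] at this
    exact le_of_lt (lt_of_le_of_lt (le_abs_self _) (by linarith))

lemma Psi_iter_small (hψ : ClassP ψ) (k : ℕ) : ∀ ε : ℝ, 0 < ε → ∃ δ : ℝ, 0 < δ ∧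
    ∀ r : ℝ, 0 ≤ r → r ≤ δ → (Psi ψ)^[k] r ≤ ε := by
  induction k with
  | zero => intro ε hε; exact ⟨ε, hε, fun r _ h => by simpa using h⟩
  | succ k ih =>
    intro ε hε
    obtain ⟨δ1, hδ1, h1⟩ := Psi_small hψ ε hε
    obtain ⟨δ, hδ, h2⟩ := ih δ1 hδ1
    refine ⟨δ, hδ, fun r hr hrδ => ?_⟩
    rw [Function.iterate_succ_apply']
    exact h1 _ (Psi_iter_nonneg k r hr) (h2 r hr hrδ)

lemma Psi_zero (hψ : ClassP ψ) : Psi ψ 0 = 0 := by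
  have : max (0:ℝ) 0 = 0 := max_self 0
  rw [Psi, this]
  rw [Set.Icc_self, Set.image_singleton, csSup_singleton, hψ.2.1, this]

lemma Psi_iter_zero (hψ : ClassP ψ) (n : ℕ) : (Psi ψ)^[n] 0 = 0 := by
  induction n with
  | zero => rfl
  | succ k ih => rw [Function.iterate_succ_apply', ih, Psi_zero hψ]


lemma classP_nonneg (hφ : ClassP φ) {x : ℝ} (hx : 0 ≤ x) : 0 ≤ φ x := by
  rcases eq_or_lt_of_le hx with h | h
  · rw [← h, hφ.2.1]
  · exact le_of_lt (hφ.2.2 x h)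

set_option maxHeartbeats 2000000 in
/-- The key flow estimate: on an impulse-free interval, the Lyapunov value `V ∘ z`
decreases at least by `∫ p`. -/
lemma flow_estimate (hφ : ClassP φ) {p z : ℝ → ℝ} (hp : LocIntNN p) {a b : ℝ}
    (hab : a ≤ b) (ha : 0 ≤ a)
    (hzcont : ContinuousOn z (Set.Icc a b))
    (hznn : ∀ s ∈ Set.Icc a b, 0 ≤ z s)
    (hzb : 0 < z b)
    (hint : ∀ a' b', a ≤ a' → a' ≤ b' → b' ≤ b →
      IntervalIntegrable (fun s => p s * φ (z s)) volume a' b' ∧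
        z b' - z a' ≤ - ∫ s in a'..b', p s * φ (z s)) :
    V φ (z b) ≤ V φ (z a) - ∫ s in a..b, p s := by
  -- monotonicity of z
  have hmono : ∀ s t', a ≤ s → s ≤ t' → t' ≤ b → z t' ≤ z s := by
    intro s t' has hst htb
    obtain ⟨hii, hle⟩ := hint s t' has hst htb
    have hnn : (0:ℝ) ≤ ∫ x in s..t', p x * φ (z x) := by
      apply intervalIntegral.integral_nonneg hst
      intro u hu
      exact mul_nonneg (hp.1 u) (classP_nonneg hφ (hznn u ⟨le_trans has hu.1, le_trans hu.2 htb⟩))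
    linarith
  have hrange : ∀ s ∈ Set.Icc a b, z b ≤ z s ∧ z s ≤ z a :=
    fun s hs => ⟨hmono s b hs.1 hs.2 le_rfl, hmono a s le_rfl hs.1 hs.2⟩
  set m := z b with hm
  set R := z a with hR
  have hmR : m ≤ R := hmono a b le_rfl hab le_rfl
  have hzpos : ∀ s ∈ Set.Icc a b, 0 < z s := fun s hs => lt_of_lt_of_le hzb (hrange s hs).1
  rcases eq_or_lt_of_le hab with rfl | haltb
  · simp; exact le_rfl
  -- the minimum of φ on [m, R]
  obtain ⟨xmin, hxmin, hminOn⟩ := isCompact_Icc.exists_isMinOn (Set.nonempty_Icc.mpr hmR)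
    (hφ.1.mono (fun x hx => le_trans (le_of_lt hzb) hx.1))
  set φmin := φ xmin with hφm
  have hφminpos : 0 < φmin := hφ.2.2 xmin (lt_of_lt_of_le hzb hxmin.1)
  have hφmin_le : ∀ x ∈ Set.Icc m R, φmin ≤ φ x := fun x hx => hminOn hx
  -- p is integrable and its integral over [a,b] is nonnegative
  have hpint : ∀ a' b', a ≤ a' → a ≤ b' → IntervalIntegrable p volume a' b' := by
    intro a' b' h1 h2
    rcases le_total a' b' with h | h
    · exact hp.2 a' b' (le_trans ha h1) h
    · exact (hp.2 b' a' (le_trans ha h2) h).symm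
  set Ip := ∫ s in a..b, p s with hIp
  have hIpnn : 0 ≤ Ip := intervalIntegral.integral_nonneg hab (fun u _ => hp.1 u)
  -- it suffices to prove the bound up to every e > 0
  apply le_of_forall_pos_le_add
  intro e he
  set ε' := e * φmin / (2 * (Ip + 1)) with hε'
  have hε'pos : 0 < ε' := by positivity
  -- uniform continuity of φ ∘ z on [a,b]
  have hgc : ContinuousOn (fun s => φ (z s)) (Set.Icc a b) := by
    apply ContinuousOn.comp (hφ.1) hzcont
    intro s hs
    exact le_of_lt (hzpos s hs)
  have hguc := isCompact_Icc.uniformContinuousOn_of_continuous hgc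
  rw [Metric.uniformContinuousOn_iff] at hguc
  obtain ⟨δ, hδpos, hδ⟩ := hguc ε' hε'pos
  -- the partition
  set K : ℕ := ⌈(b - a) / δ⌉₊ + 1 with hK
  have hKpos : (0:ℝ) < K := by positivity
  set h := (b - a) / K with hh
  have hhpos : 0 < h := div_pos (by linarith) hKpos
  have hhδ : h < δ := by
    rw [hh, div_lt_iff₀ hKpos]
    have h1 : (b - a) / δ ≤ ⌈(b - a) / δ⌉₊ := Nat.le_ceil _
    have h2 : (⌈(b - a) / δ⌉₊ : ℝ) < K := by
      rw [hK]; push_cast; linarith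
    calc b - a = ((b-a)/δ) * δ := by field_simp
    _ ≤ (⌈(b - a) / δ⌉₊ : ℝ) * δ := by apply mul_le_mul_of_nonneg_right h1 (le_of_lt hδpos)
    _ < δ * K := by rw [mul_comm δ (K:ℝ)]; exact mul_lt_mul_of_pos_right h2 hδpos
  set t : ℕ → ℝ := fun i => a + i * h with ht
  have ht0 : t 0 = a := by simp [ht]
  have htK : t K = b := by
    rw [ht]; simp only; rw [hh]; field_simp; ring
  have htmono : ∀ i j : ℕ, i ≤ j → t i ≤ t j := by
    intro i j hij
    simp only [ht]
    have : (i:ℝ) ≤ j := Nat.cast_le.mpr hij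
    nlinarith
  have htmem : ∀ i : ℕ, i ≤ K → t i ∈ Set.Icc a b := by
    intro i hi
    exact ⟨by rw [← ht0]; exact htmono 0 i (Nat.zero_le i),
      by rw [← htK]; exact htmono i K hi⟩
  -- per-piece estimate
  have hpiece : ∀ i : ℕ, i < K →
      V φ (z (t (i+1))) - V φ (z (t i)) ≤ -(1 - 2*ε'/φmin) * ∫ s in t i..t (i+1), p s := by
    intro i hi
    have hti : t i ∈ Set.Icc a b := htmem i (le_of_lt hi)
    have hti1 : t (i+1) ∈ Set.Icc a b := htmem (i+1) hi
    have htle : t i ≤ t (i+1) := htmono i (i+1) (Nat.le_succ i)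
    have htdiff : t (i+1) - t i = h := by simp only [ht]; push_cast; ring
    have hclose : ∀ σ ∈ Set.Icc (t i) (t (i+1)), |φ (z σ) - φ (z (t i))| < ε' := by
      intro σ hσ
      have hσm : σ ∈ Set.Icc a b := ⟨le_trans hti.1 hσ.1, le_trans hσ.2 hti1.2⟩
      have := hδ σ hσm (t i) hti (by
        rw [Real.dist_eq, abs_of_nonneg (by linarith [hσ.1])]
        have := hσ.2
        linarith)
      rwa [Real.dist_eq] at this
    set v := φ (z (t i)) with hv
    have hzti : z (t i) ∈ Set.Icc m R := ⟨(hrange _ hti).1, (hrange _ hti).2⟩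
    have hvmin : φmin ≤ v := hφmin_le _ hzti
    have hvε : 0 < v + ε' := by linarith
    set Ipc := ∫ s in t i..t (i+1), p s with hIpc
    have hIpcnn : 0 ≤ Ipc := intervalIntegral.integral_nonneg htle (fun u _ => hp.1 u)
    set d := z (t i) - z (t (i+1)) with hd
    have hdnn : 0 ≤ d := by
      have := hmono (t i) (t (i+1)) hti.1 htle hti1.2
      simp only [hd]; linarith
    -- lower bound on the decrement d
    obtain ⟨hii, hle⟩ := hint (t i) (t (i+1)) hti.1 htle hti1.2
    have hdlow : (v - ε') * Ipc ≤ d := by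
      have hmono2 : ∫ s in t i..t (i+1), (v - ε') * p s ≤ ∫ s in t i..t (i+1), p s * φ (z s) := by
        apply intervalIntegral.integral_mono_on htle ((hpint _ _ hti.1 hti1.1).const_mul _) hii
        intro x hx
        have h1 : v - ε' ≤ φ (z x) := by
          have := hclose x hx
          rw [abs_lt] at this
          linarith [this.1]
        calc (v - ε') * p x ≤ φ (z x) * p x :=
              mul_le_mul_of_nonneg_right h1 (hp.1 x)
        _ = p x * φ (z x) := by ring
      rw [intervalIntegral.integral_const_mul] at hmono2
      simp only [hd]
      linarith
    -- V-difference lower bound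
    have hzpos1 : 0 < z (t (i+1)) := hzpos _ hti1
    have hzpos0 : 0 < z (t i) := hzpos _ hti
    have hVd : d * (1/(v + ε')) ≤ V φ (z (t i)) - V φ (z (t (i+1))) := by
      rw [V_sub hφ hzpos1 hzpos0]
      have himg : Set.Icc (z (t (i+1))) (z (t i)) ⊆ z '' Set.Icc (t i) (t (i+1)) := by
        apply intermediate_value_Icc' htle (hzcont.mono ?_)
        intro x hx
        exact ⟨le_trans hti.1 hx.1, le_trans hx.2 hti1.2⟩
      have hmono3 : ∫ s in z (t (i+1))..z (t i), (fun _ => 1/(v + ε')) s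
          ≤ ∫ s in z (t (i+1))..z (t i), 1 / φ s := by
        apply intervalIntegral.integral_mono_on (by simp only [hd] at hdnn; linarith)
          intervalIntegrable_const (inv_intable hφ hzpos1 hzpos0)
        intro x hx
        obtain ⟨σ, hσ, hσx⟩ := himg hx
        have hφx : φ x ≤ v + ε' := by
          have := hclose σ hσ
          rw [abs_lt, hσx] at this
          linarith [this.2]
        have hφxpos : 0 < φ x := hφ.2.2 x (lt_of_lt_of_le hzpos1 hx.1)
        rw [div_le_div_iff₀ hvε hφxpos]
        nlinarith
      rw [intervalIntegral.integral_const] at hmono3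
      simp only [smul_eq_mul] at hmono3
      calc d * (1/(v + ε')) = (z (t i) - z (t (i+1))) * (1/(v+ε')) := by rw [hd]
      _ ≤ ∫ s in z (t (i+1))..z (t i), 1 / φ s := hmono3
    -- coefficient comparison
    have hcoef : (1 - 2*ε'/φmin) * Ipc ≤ ((v - ε')/(v + ε')) * Ipc := by
      apply mul_le_mul_of_nonneg_right _ hIpcnn
      have h2 : 2*ε'/(v+ε') ≤ 2*ε'/φmin :=
        div_le_div_of_nonneg_left (by linarith) hφminpos (by linarith)
      have h3 : (v - ε')/(v + ε') = 1 - 2*ε'/(v+ε') := by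
        field_simp
        ring
      rw [h3]
      linarith
    have hmid : ((v - ε')/(v + ε')) * Ipc ≤ d * (1/(v+ε')) := by
      rw [div_mul_eq_mul_div, mul_one_div]
      gcongr
    calc V φ (z (t (i+1))) - V φ (z (t i)) = -(V φ (z (t i)) - V φ (z (t (i+1)))) := by ring
    _ ≤ -(d * (1/(v+ε'))) := by linarith [hVd]
    _ ≤ -(((v - ε')/(v + ε')) * Ipc) := by linarith [hmid]
    _ ≤ -(1 - 2*ε'/φmin) * Ipc := by linarith [hcoef]
  -- sum up
  have hsum1 : ∑ i ∈ Finset.range K, (V φ (z (t (i+1))) - V φ (z (t i)))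
      = V φ (z b) - V φ (z a) := by
    rw [Finset.sum_range_sub (f := fun i => V φ (z (t i)))]
    rw [ht0, htK]
  have hsum2 : ∑ i ∈ Finset.range K, ∫ s in t i..t (i+1), p s = Ip := by
    rw [intervalIntegral.sum_integral_adjacent_intervals]
    · rw [ht0, htK]
    · intro k hk
      exact hpint _ _ (htmem k (le_of_lt hk)).1 (htmem (k+1) hk).1
  have htot : V φ (z b) - V φ (z a) ≤ -(1 - 2*ε'/φmin) * Ip := by
    rw [← hsum1, ← hsum2, Finset.mul_sum]
    exact Finset.sum_le_sum (fun i hi => hpiece i (Finset.mem_range.mp hi))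
  have hfin : 2*ε'/φmin * Ip ≤ e := by
    rw [hε']
    have hexp : 2 * (e * φmin / (2 * (Ip + 1))) / φmin * Ip = e * (Ip / (Ip+1)) := by
      field_simp
      skip
    rw [hexp]
    have h1 : Ip / (Ip + 1) ≤ 1 := by
      rw [div_le_one (by positivity)]
      linarith
    nlinarith
  have hexpand : -(1 - 2*ε'/φmin) * Ip = -Ip + 2*ε'/φmin * Ip := by ring
  linarith [htot]


section Trajectory

variable {p ψ : ℝ → ℝ} {γ : Set ℝ} {t0 : ℝ} {T : EReal} {z0 : ℝ} {z : ℝ → ℝ}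

lemma coe_lt_T {x t : ℝ} (hxt : x ≤ t) (ht : (t : EReal) < T) : (x : EReal) < T :=
  lt_of_le_of_lt (EReal.coe_le_coe_iff.mpr hxt) ht

/-- Jump estimate from the definition of `Mval`. -/
lemma jump_est (hφ : ClassP φ) (hψ : ClassP ψ) (hM : 0 < Mval φ ψ) {a : ℝ} (ha : 0 < a) :
    V φ (ψ a) ≤ V φ a + Mval φ ψ := by
  have hmem : (∫ s in a..(ψ a), 1 / φ s) ∈ {y : ℝ | ∃ a : ℝ, 0 < a ∧ y = ∫ s in a..(ψ a), 1 / φ s} :=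
    ⟨a, ha, rfl⟩
  have hbdd : BddAbove {y : ℝ | ∃ a : ℝ, 0 < a ∧ y = ∫ s in a..(ψ a), 1 / φ s} := by
    by_contra hcon
    rw [Mval, Real.sSup_of_not_bddAbove hcon] at hM
    exact absurd hM (lt_irrefl 0)
  have h1 : (∫ s in a..(ψ a), 1 / φ s) ≤ Mval φ ψ := le_csSup hbdd hmem
  have h2 : V φ (ψ a) - V φ a = ∫ s in a..(ψ a), 1 / φ s :=
    V_sub hφ ha (hψ.2.2 a ha)
  linarith

variable (hsol : IsCompSol p φ ψ γ t0 T z0 z)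

/-- Flow on an impulse-free closed interval, combined form. -/
lemma flow_seg (hφ : ClassP φ) (hp : LocIntNN p) (hsol : IsCompSol p φ ψ γ t0 T z0 z)
    (ht00 : 0 ≤ t0) {a b : ℝ} (hta : t0 ≤ a) (hab : a ≤ b) (hbT : (b : EReal) < T)
    (hfree : γ ∩ Set.Ioc a b = ∅) :
    z b ≤ z a ∧ (0 < z b → V φ (z b) ≤ V φ (z a) - ∫ s in a..b, p s) := by
  have hsub : ∀ a' b', a ≤ a' → a' ≤ b' → b' ≤ b →
      IntervalIntegrable (fun s => p s * φ (z s)) volume a' b' ∧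
        z b' - z a' ≤ - ∫ s in a'..b', p s * φ (z s) := by
    intro a' b' h1 h2 h3
    apply hsol.flow_int a' b' (le_trans hta h1) h2 (coe_lt_T h3 hbT)
    rw [Set.eq_empty_iff_forall_notMem] at hfree ⊢
    intro x hx
    exact hfree x ⟨hx.1, lt_of_le_of_lt h1 hx.2.1, le_trans hx.2.2 h3⟩
  have hznn : ∀ s ∈ Set.Icc a b, 0 ≤ z s := fun s hs =>
    hsol.nonneg s (le_trans hta hs.1) (coe_lt_T hs.2 hbT)
  constructor
  · obtain ⟨hii, hle⟩ := hsub a b le_rfl hab le_rfl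
    have hnn : (0:ℝ) ≤ ∫ x in a..b, p x * φ (z x) :=
      intervalIntegral.integral_nonneg hab (fun u hu =>
        mul_nonneg (hp.1 u) (classP_nonneg hφ (hznn u hu)))
    linarith
  · intro hzb
    exact flow_estimate hφ hp hab (le_trans ht00 hta)
      (hsol.flow_cont a b hta hab hbT hfree) hznn hzb hsub

/-- Zero is absorbing. -/
lemma absorb (hφ : ClassP φ) (hψ : ClassP ψ) (hp : LocIntNN p)
    (hsol : IsCompSol p φ ψ γ t0 T z0 z) (ht00 : 0 ≤ t0) (hγ : IsImpulseSeq γ) :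
    ∀ k : ℕ, ∀ s t : ℝ, t0 ≤ s → s ≤ t → (t : EReal) < T → impCnt γ s t = k →
      z s = 0 → z t = 0 := by
  intro k
  induction k using Nat.strong_induction_on with
  | _ k ih =>
    intro s t hs hst htT hcnt hzs
    have hAfin : (γ ∩ Set.Ioc s t).Finite := (hγ.2 t).subset
      (Set.inter_subset_inter_right γ Set.Ioc_subset_Iic_self)
    rcases Set.eq_empty_or_nonempty (γ ∩ Set.Ioc s t) with hA | hA
    · -- no impulses: pure flow from 0
      have := (flow_seg hφ hp hsol ht00 hs hst htT hA).1
      have hnn := hsol.nonneg t (le_trans hs hst) htT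
      rw [hzs] at this
      linarith
    · -- first impulse σ
      have hAfne : hAfin.toFinset.Nonempty := by
        rwa [Set.Finite.toFinset_nonempty]
      set σ := hAfin.toFinset.min' hAfne with hσdef
      have hσmem : σ ∈ γ ∩ Set.Ioc s t := by
        have h := hAfin.toFinset.min'_mem hAfne
        rwa [Set.Finite.mem_toFinset] at h
      have hσmin : ∀ x ∈ γ ∩ Set.Ioc s t, σ ≤ x := by
        intro x hx
        apply Finset.min'_le
        rwa [Set.Finite.mem_toFinset]
      have hsσ : s < σ := hσmem.2.1
      have hσt : σ ≤ t := hσmem.2.2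
      have hσT : (σ : EReal) < T := coe_lt_T hσt htT
      -- z vanishes on [s, σ)
      have hzero : ∀ s' : ℝ, s ≤ s' → s' < σ → z s' = 0 := by
        intro s' h1 h2
        have hfree : γ ∩ Set.Ioc s s' = ∅ := by
          rw [Set.eq_empty_iff_forall_notMem]
          intro x hx
          have hxA : x ∈ γ ∩ Set.Ioc s t :=
            ⟨hx.1, hx.2.1, le_trans hx.2.2 (le_trans (le_of_lt h2) hσt)⟩
          exact absurd (lt_of_le_of_lt hx.2.2 h2) (not_lt_of_ge (hσmin x hxA))
        have := (flow_seg hφ hp hsol ht00 hs h1 (coe_lt_T (le_trans (le_of_lt h2) hσt) htT) hfree).1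
        have hnn := hsol.nonneg s' (le_trans hs h1) (coe_lt_T (le_trans (le_of_lt h2) hσt) htT)
        rw [hzs] at this
        linarith
      -- left limit at σ is 0, so z σ = 0
      obtain ⟨L, hLtend, hjump⟩ := hsol.jump σ hσmem.1 (lt_of_le_of_lt hs hsσ) hσT
      have hL0 : L = 0 := by
        have hev : Tendsto z (nhdsWithin σ (Set.Iio σ)) (nhds 0) := by
          apply Tendsto.congr' _ tendsto_const_nhds
          filter_upwards [Ioo_mem_nhdsLT hsσ] with x hx
          exact (hzero x (le_of_lt hx.1) hx.2).symm
        exact tendsto_nhds_unique hLtend hev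
      have hzσ : z σ = 0 := by
        have h1 := hjump
        rw [hL0, hψ.2.1] at h1
        have h2 := hsol.nonneg σ (le_trans hs (le_of_lt hsσ)) hσT
        linarith
      -- recurse
      have hk : 0 < k := by
        rw [← hcnt, impCnt]
        exact (Set.ncard_pos hAfin).mpr hA
      have hcnt' : impCnt γ σ t = k - 1 := by
        have hset : γ ∩ Set.Ioc σ t = (γ ∩ Set.Ioc s t) \ {σ} := by
          ext x
          constructor
          · intro hx
            exact ⟨⟨hx.1, lt_trans hsσ hx.2.1, hx.2.2⟩, ne_of_gt hx.2.1⟩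
          · intro hx
            refine ⟨hx.1.1, ?_, hx.1.2.2⟩
            rcases lt_or_eq_of_le (hσmin x hx.1) with h | h
            · exact h
            · exact absurd h.symm hx.2
        rw [impCnt, hset, Set.ncard_diff_singleton_of_mem hσmem]
        rw [impCnt] at hcnt
        rw [hcnt]
      exact ih (k-1) (Nat.sub_lt hk one_pos) σ t (le_trans hs (le_of_lt hsσ)) hσt htT hcnt' hzσ


set_option maxHeartbeats 2000000 in
/-- Master estimate along the trajectory: Lyapunov decay with jump penalty, plus
the iterated-envelope bound. -/
lemma master (hφ : ClassP φ) (hψ : ClassP ψ) (hp : LocIntNN p)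
    (hsol : IsCompSol p φ ψ γ t0 T z0 z) (ht00 : 0 ≤ t0) (hγ : IsImpulseSeq γ)
    (hM : 0 < Mval φ ψ) (hz0 : 0 < z0) :
    ∀ n : ℕ, ∀ t : ℝ, t0 ≤ t → (t : EReal) < T → impCnt γ t0 t = n →
      z t = 0 ∨ (0 < z t ∧
        V φ (z t) ≤ V φ z0 + n * Mval φ ψ - (∫ s in t0..t, p s) ∧
        z t ≤ (Psi ψ)^[n] z0) := by
  intro n
  induction n with
  | zero =>
    intro t ht htT hcnt
    have hA : γ ∩ Set.Ioc t0 t = ∅ := by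
      have hAfin : (γ ∩ Set.Ioc t0 t).Finite := (hγ.2 t).subset
        (Set.inter_subset_inter_right γ Set.Ioc_subset_Iic_self)
      rw [impCnt] at hcnt
      exact (Set.ncard_eq_zero hAfin).mp hcnt
    have hseg := flow_seg hφ hp hsol ht00 le_rfl ht htT hA
    have hznn := hsol.nonneg t ht htT
    rcases eq_or_lt_of_le hznn with hz | hz
    · exact Or.inl hz.symm
    · refine Or.inr ⟨hz, ?_, ?_⟩
      · have := hseg.2 hz
        rw [hsol.init] at this
        push_cast
        linarith
      · have := hseg.1
        rw [hsol.init] at this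
        simpa using this
  | succ n ihn =>
    intro t ht htT hcnt
    have hznn := hsol.nonneg t ht htT
    rcases eq_or_lt_of_le hznn with hz | hz
    · exact Or.inl hz.symm
    right
    -- extract the last impulse τ
    have hAfin : (γ ∩ Set.Ioc t0 t).Finite := (hγ.2 t).subset
      (Set.inter_subset_inter_right γ Set.Ioc_subset_Iic_self)
    have hAne : (γ ∩ Set.Ioc t0 t).Nonempty := by
      rw [← Set.ncard_pos hAfin, impCnt] at *
      omega
    have hAfne : hAfin.toFinset.Nonempty := by rwa [Set.Finite.toFinset_nonempty]
    set τ := hAfin.toFinset.max' hAfne with hτdef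
    have hτmem : τ ∈ γ ∩ Set.Ioc t0 t := by
      have h := hAfin.toFinset.max'_mem hAfne
      rwa [Set.Finite.mem_toFinset] at h
    have hτmax : ∀ x ∈ γ ∩ Set.Ioc t0 t, x ≤ τ := by
      intro x hx
      apply Finset.le_max'
      rwa [Set.Finite.mem_toFinset]
    have ht0τ : t0 < τ := hτmem.2.1
    have hτt : τ ≤ t := hτmem.2.2
    have hτT : (τ : EReal) < T := coe_lt_T hτt htT
    -- the pre-τ threshold s₀
    have hBfin : ((γ ∩ Set.Ioc t0 t) \ {τ}).Finite := hAfin.diff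
    set s₀ := (insert t0 hBfin.toFinset).max' (Finset.insert_nonempty _ _) with hs₀def
    have hs₀t0 : t0 ≤ s₀ := Finset.le_max' _ _ (Finset.mem_insert_self _ _)
    have hs₀B : ∀ x ∈ (γ ∩ Set.Ioc t0 t) \ {τ}, x ≤ s₀ := by
      intro x hx
      apply Finset.le_max'
      apply Finset.mem_insert_of_mem
      rwa [Set.Finite.mem_toFinset]
    have hs₀τ : s₀ < τ := by
      have h := (insert t0 hBfin.toFinset).max'_mem (Finset.insert_nonempty _ _)
      rw [← hs₀def, Finset.mem_insert] at h
      rcases h with h | h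
      · rw [h]; exact ht0τ
      · rw [Set.Finite.mem_toFinset] at h
        rcases lt_or_eq_of_le (hτmax _ h.1) with h2 | h2
        · exact h2
        · exact absurd h2 h.2
    -- count structure for s ∈ (s₀, τ)
    have hcnts : ∀ s : ℝ, s₀ < s → s < τ → γ ∩ Set.Ioc t0 s = (γ ∩ Set.Ioc t0 t) \ {τ} := by
      intro s h1 h2
      ext x
      constructor
      · intro hx
        have hxτ : x < τ := lt_of_le_of_lt hx.2.2 h2
        exact ⟨⟨hx.1, hx.2.1, le_trans hx.2.2 (le_trans (le_of_lt h2) hτt)⟩, ne_of_lt hxτ⟩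
      · intro hx
        exact ⟨hx.1.1, hx.1.2.1, le_trans (hs₀B x hx) (le_of_lt h1)⟩
    have hcntn : ∀ s : ℝ, s₀ < s → s < τ → impCnt γ t0 s = n := by
      intro s h1 h2
      rw [impCnt, hcnts s h1 h2, Set.ncard_diff_singleton_of_mem hτmem]
      rw [impCnt] at hcnt
      omega
    -- jump data at τ
    obtain ⟨L, hLtend, hjump⟩ := hsol.jump τ hτmem.1 ht0τ hτT
    -- impulse-free tail (τ, t]
    have hfree : γ ∩ Set.Ioc τ t = ∅ := by
      rw [Set.eq_empty_iff_forall_notMem]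
      intro x hx
      have : x ∈ γ ∩ Set.Ioc t0 t := ⟨hx.1, lt_trans ht0τ hx.2.1, hx.2.2⟩
      exact absurd (hτmax x this) (not_le_of_gt hx.2.1)
    -- if z vanishes anywhere relevant, z t = 0, contradiction with hz
    have habs : ∀ s : ℝ, t0 ≤ s → s ≤ t → z s = 0 → False := by
      intro s h1 h2 h3
      have hAfin2 : (γ ∩ Set.Ioc s t).Finite := (hγ.2 t).subset
        (Set.inter_subset_inter_right γ Set.Ioc_subset_Iic_self)
      have := absorb hφ hψ hp hsol ht00 hγ (impCnt γ s t) s t h1 h2 htT rfl h3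
      rw [this] at hz
      exact lt_irrefl 0 hz
    -- all z s > 0 for s ∈ (s₀, τ)
    have hpos : ∀ s : ℝ, s₀ < s → s < τ → 0 < z s := by
      intro s h1 h2
      have h3 : t0 ≤ s := le_trans hs₀t0 (le_of_lt h1)
      have h4 : s ≤ t := le_trans (le_of_lt h2) hτt
      rcases eq_or_lt_of_le (hsol.nonneg s h3 (coe_lt_T h4 htT)) with h5 | h5
      · exact absurd h5.symm (fun hh => habs s h3 h4 hh)
      · exact h5
    -- facts at s ∈ (s₀, τ) from the induction hypothesis
    have hIH : ∀ s : ℝ, s₀ < s → s < τ →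
        V φ (z s) ≤ V φ z0 + n * Mval φ ψ - (∫ x in t0..s, p x) ∧ z s ≤ (Psi ψ)^[n] z0 := by
      intro s h1 h2
      have h3 : t0 ≤ s := le_trans hs₀t0 (le_of_lt h1)
      have h4 : s ≤ t := le_trans (le_of_lt h2) hτt
      rcases ihn s h3 (coe_lt_T h4 htT) (hcntn s h1 h2) with h | h
      · exact absurd h (fun hh => habs s h3 h4 hh)
      · exact ⟨h.2.1, h.2.2⟩
    -- pass to the limit s → τ⁻
    have hLnn : 0 ≤ L := by
      apply ge_of_tendsto hLtend
      filter_upwards [Ioo_mem_nhdsLT hs₀τ] with x hx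
      exact le_of_lt (hpos x hx.1 hx.2)
    rcases eq_or_lt_of_le hLnn with hL0 | hLpos
    · -- L = 0 forces z τ = 0 and then z t = 0, contradiction
      exfalso
      have h1 := hjump
      rw [← hL0, hψ.2.1] at h1
      have h2 := hsol.nonneg τ (le_of_lt ht0τ) hτT
      exact habs τ (le_of_lt ht0τ) hτt (le_antisymm h1 h2)
    -- limit of the Lyapunov bound
    have hVL : V φ L ≤ V φ z0 + n * Mval φ ψ - (∫ x in t0..τ, p x) := by
      have htd1 : Tendsto (fun s => V φ (z s)) (nhdsWithin τ (Set.Iio τ)) (nhds (V φ L)) :=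
        (V_continuousAt hφ hLpos).tendsto.comp hLtend
      have htd2 : Tendsto (fun s => V φ z0 + n * Mval φ ψ - (∫ x in t0..s, p x))
          (nhdsWithin τ (Set.Iio τ)) (nhds (V φ z0 + n * Mval φ ψ - (∫ x in t0..τ, p x))) := by
        apply Tendsto.const_sub
        have hP : ContinuousWithinAt (fun s => ∫ x in t0..s, p x) (Set.Icc t0 τ) τ := by
          apply intervalIntegral.continuousWithinAt_primitive (by simp)
          apply hp.2 _ _ (by simpa using ht00)
          simp [le_of_lt ht0τ]
        have hle : nhdsWithin τ (Set.Iio τ) ≤ nhdsWithin τ (Set.Icc t0 τ) := by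
          rw [← nhdsWithin_Ioo_eq_nhdsLT (lt_of_le_of_lt hs₀t0 hs₀τ : t0 < τ)]
          apply nhdsWithin_mono
          intro x hx
          exact ⟨le_of_lt hx.1, le_of_lt hx.2⟩
        exact hP.mono_left hle
      apply le_of_tendsto_of_tendsto htd1 htd2
      filter_upwards [Ioo_mem_nhdsLT hs₀τ] with x hx
      exact (hIH x hx.1 hx.2).1
    have hLle : L ≤ (Psi ψ)^[n] z0 := by
      apply le_of_tendsto hLtend
      filter_upwards [Ioo_mem_nhdsLT hs₀τ] with x hx
      exact (hIH x hx.1 hx.2).2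
    -- estimates at τ
    have hzτnn := hsol.nonneg τ (le_of_lt ht0τ) hτT
    have hzτpos : 0 < z τ := by
      rcases eq_or_lt_of_le hzτnn with h | h
      · exact absurd h.symm (fun hh => habs τ (le_of_lt ht0τ) hτt hh)
      · exact h
    have hψL : 0 < ψ L := hψ.2.2 L hLpos
    have hVτ : V φ (z τ) ≤ V φ z0 + (n+1) * Mval φ ψ - (∫ x in t0..τ, p x) := by
      have h1 : V φ (z τ) ≤ V φ (ψ L) := V_mono hφ hzτpos hjump
      have h2 := jump_est hφ hψ hM hLpos
      push_cast
      linarith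
    have hzτle : z τ ≤ (Psi ψ)^[n+1] z0 := by
      rw [Function.iterate_succ_apply']
      calc z τ ≤ ψ L := hjump
      _ ≤ Psi ψ ((Psi ψ)^[n] z0) := psi_le_Psi hψ hLnn hLle
    -- flow from τ to t
    have hseg := flow_seg hφ hp hsol ht00 (le_of_lt ht0τ) hτt htT hfree
    refine ⟨hz, ?_, le_trans hseg.1 hzτle⟩
    have h1 := hseg.2 hz
    have hsplit : (∫ x in t0..τ, p x) + (∫ x in τ..t, p x) = ∫ x in t0..t, p x := by
      apply intervalIntegral.integral_add_adjacent_intervals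
      · exact hp.2 _ _ ht00 (le_of_lt ht0τ)
      · exact hp.2 _ _ (le_trans ht00 (le_of_lt ht0τ)) hτt
    have h2 : V φ (z t) ≤ V φ (z τ) - (∫ x in τ..t, p x) := h1
    push_cast
    push_cast at hVτ
    linarith

end Trajectory

section Window

lemma Nval_nonneg_mem {p : ℝ → ℝ} {θ : ℝ} (hp : LocIntNN p) (hθ : 0 < θ) :
    ∀ y ∈ {y : ℝ | ∃ t : ℝ, 0 ≤ t ∧ y = ∫ s in t..(t + θ), p s}, (0:ℝ) ≤ y := by
  rintro y ⟨t, ht, rfl⟩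
  exact intervalIntegral.integral_nonneg (by linarith) (fun u _ => hp.1 u)

lemma Nval_le {p : ℝ → ℝ} {θ : ℝ} (hp : LocIntNN p) (hθ : 0 < θ) {s : ℝ} (hs : 0 ≤ s) :
    Nval p θ ≤ ∫ x in s..(s + θ), p x := by
  apply csInf_le ⟨0, fun y hy => Nval_nonneg_mem hp hθ y hy⟩
  exact ⟨s, hs, rfl⟩

lemma window_bound {p : ℝ → ℝ} {θ : ℝ} (hp : LocIntNN p) (hθ : 0 < θ)
    (hN0 : 0 ≤ Nval p θ) {t0 t : ℝ} (ht00 : 0 ≤ t0) (ht : t0 ≤ t) :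
    ((t - t0)/θ - 1) * Nval p θ ≤ ∫ s in t0..t, p s := by
  set k := ⌊(t - t0)/θ⌋₊ with hk
  have hknn : (0:ℝ) ≤ (t - t0)/θ := div_nonneg (by linarith) (le_of_lt hθ)
  have hkle : (k:ℝ) ≤ (t - t0)/θ := Nat.floor_le hknn
  have hklt : (t - t0)/θ < k + 1 := Nat.lt_floor_add_one _
  set a : ℕ → ℝ := fun i => t0 + i * θ with ha
  have hat : ∀ i : ℕ, i ≤ k → a i ≤ t := by
    intro i hi
    have h1 : (i:ℝ) ≤ (t - t0)/θ := le_trans (Nat.cast_le.mpr hi) hkle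
    have h2 : (i:ℝ) * θ ≤ t - t0 := by
      rw [← div_mul_cancel₀ (t - t0) (ne_of_gt hθ)]
      exact mul_le_mul_of_nonneg_right h1 (le_of_lt hθ)
    simp only [ha]
    linarith
  have hann : ∀ i : ℕ, 0 ≤ a i := by
    intro i
    simp only [ha]
    positivity
  have hsum : ∑ i ∈ Finset.range k, ∫ x in a i..a (i+1), p x = ∫ x in t0..a k, p x := by
    have hint : ∀ i, i < k → IntervalIntegrable p volume (a i) (a (i+1)) := by
      intro i hi
      apply hp.2 _ _ (hann i)
      simp only [ha]
      push_cast
      nlinarith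
    have h := intervalIntegral.sum_integral_adjacent_intervals (f := p) (μ := volume)
      (a := a) (n := k) hint
    rw [h]
    have ha0 : a 0 = t0 := by simp [ha]
    rw [ha0]
  have hterm : ∀ i ∈ Finset.range k, Nval p θ ≤ ∫ x in a i..a (i+1), p x := by
    intro i _
    have h := Nval_le hp hθ (hann i)
    have he : a i + θ = a (i+1) := by simp only [ha]; push_cast; ring
    rwa [he] at h
  have h1 : (k:ℝ) * Nval p θ ≤ ∫ x in t0..a k, p x := by
    rw [← hsum]
    calc (k:ℝ) * Nval p θ = ∑ _i ∈ Finset.range k, Nval p θ := by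
          rw [Finset.sum_const, Finset.card_range]; ring
    _ ≤ _ := Finset.sum_le_sum hterm
  have h2 : ∫ x in t0..a k, p x ≤ ∫ x in t0..t, p x := by
    have hsplit : (∫ x in t0..a k, p x) + ∫ x in a k..t, p x = ∫ x in t0..t, p x := by
      apply intervalIntegral.integral_add_adjacent_intervals
      · apply hp.2 _ _ ht00
        simp only [ha]
        nlinarith [mul_nonneg (Nat.cast_nonneg k : (0:ℝ) ≤ (k:ℝ)) (le_of_lt hθ)]
      · exact hp.2 _ _ (hann k) (hat k le_rfl)
    have h3 : (0:ℝ) ≤ ∫ x in a k..t, p x :=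
      intervalIntegral.integral_nonneg (hat k le_rfl) (fun u _ => hp.1 u)
    linarith
  have h4 : ((t - t0)/θ - 1) * Nval p θ ≤ (k:ℝ) * Nval p θ :=
    mul_le_mul_of_nonneg_right (by linarith) hN0
  linarith

end Window


section Beta

variable {φ ψ : ℝ → ℝ}

/-- Threshold time. -/
def Qf (φ : ℝ → ℝ) (C₁ c₁ : ℝ) : ℝ → ℝ := fun r => (V φ (max r 1) + C₁ - V φ 1) / c₁

/-- Uniform bound function (iterated jump envelope up to the threshold time). -/
def Bf (φ ψ : ℝ → ℝ) (C₁ c₁ : ℝ) : ℝ → ℝ := fun r => (Psi ψ)^[⌊Qf φ C₁ c₁ r⌋₊] (max r 0)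

/-- Primitive of `Bf`. -/
def Ff (φ ψ : ℝ → ℝ) (C₁ c₁ : ℝ) : ℝ → ℝ := fun x => ∫ s in (0:ℝ)..x, Bf φ ψ C₁ c₁ s

/-- Continuous monotone majorant of `Bf` vanishing at `0`. -/
def Bhat (φ ψ : ℝ → ℝ) (C₁ c₁ : ℝ) : ℝ → ℝ := fun r =>
  if r ≤ 0 then 0 else r + (Ff φ ψ C₁ c₁ (2*r) - Ff φ ψ C₁ c₁ r) / r

variable {C₁ c₁ : ℝ}

lemma Vmax_cont (hφ : ClassP φ) : Continuous (fun r : ℝ => V φ (max r 1)) := by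
  apply (V_continuousOn hφ).comp_continuous (continuous_id.max continuous_const)
  intro x
  exact lt_of_lt_of_le one_pos (le_max_right x 1)

lemma Vmax_mono (hφ : ClassP φ) : Monotone (fun r : ℝ => V φ (max r 1)) := by
  intro a b hab
  exact V_mono hφ (lt_of_lt_of_le one_pos (le_max_right a 1)) (max_le_max hab le_rfl)

lemma Qf_nonneg (hφ : ClassP φ) (hC₁ : 0 < C₁) (hc₁ : 0 < c₁) (r : ℝ) :
    0 ≤ Qf φ C₁ c₁ r := by
  have h1 : V φ 1 ≤ V φ (max r 1) := V_mono hφ one_pos (le_max_right r 1)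
  apply div_nonneg _ (le_of_lt hc₁)
  linarith

lemma Qf_mono (hφ : ClassP φ) (hc₁ : 0 < c₁) : Monotone (Qf φ C₁ c₁) := by
  intro a b hab
  have h := Vmax_mono hφ hab
  simp only at h
  unfold Qf
  apply div_le_div_of_nonneg_right ?_ ?_ <;> first | linarith | exact hc₁

lemma Qf_cont (hφ : ClassP φ) : Continuous (Qf φ C₁ c₁) :=
  (((Vmax_cont hφ).add continuous_const).sub continuous_const).div_const c₁

lemma Bf_nonneg (r : ℝ) : 0 ≤ Bf φ ψ C₁ c₁ r :=
  Psi_iter_nonneg _ _ (le_max_right r 0)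

lemma le_Bf (r : ℝ) : r ≤ Bf φ ψ C₁ c₁ r :=
  le_trans (le_max_left r 0) (le_Psi_iter _ _)

lemma Bf_mono (hφ : ClassP φ) (hψ : ClassP ψ) (hc₁ : 0 < c₁) :
    Monotone (Bf φ ψ C₁ c₁) := by
  intro a b hab
  calc (Psi ψ)^[⌊Qf φ C₁ c₁ a⌋₊] (max a 0) ≤ (Psi ψ)^[⌊Qf φ C₁ c₁ b⌋₊] (max a 0) :=
        Psi_iter_le_iter hψ (Nat.floor_le_floor (Qf_mono hφ hc₁ hab)) _
  _ ≤ (Psi ψ)^[⌊Qf φ C₁ c₁ b⌋₊] (max b 0) :=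
        Psi_iter_mono hψ _ (max_le_max hab le_rfl)

lemma Bf_int (hφ : ClassP φ) (hψ : ClassP ψ) (hc₁ : 0 < c₁) (a b : ℝ) :
    IntervalIntegrable (Bf φ ψ C₁ c₁) volume a b :=
  (Bf_mono hφ hψ hc₁).intervalIntegrable

lemma Ff_cont (hφ : ClassP φ) (hψ : ClassP ψ) (hc₁ : 0 < c₁) :
    Continuous (Ff φ ψ C₁ c₁) :=
  intervalIntegral.continuous_primitive (fun a b => Bf_int hφ hψ hc₁ a b) 0

lemma Ff_sub (hφ : ClassP φ) (hψ : ClassP ψ) (hc₁ : 0 < c₁) (a b : ℝ) :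
    Ff φ ψ C₁ c₁ b - Ff φ ψ C₁ c₁ a = ∫ s in a..b, Bf φ ψ C₁ c₁ s := by
  rw [Ff, Ff, intervalIntegral.integral_interval_sub_left (Bf_int hφ hψ hc₁ 0 b)
    (Bf_int hφ hψ hc₁ 0 a)]

lemma Bf_small (hφ : ClassP φ) (hψ : ClassP ψ) (hC₁ : 0 < C₁) (hc₁ : 0 < c₁) :
    ∀ ε : ℝ, 0 < ε → ∃ δ : ℝ, 0 < δ ∧ ∀ r : ℝ, 0 ≤ r → r ≤ δ → Bf φ ψ C₁ c₁ r ≤ ε := by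
  intro ε hε
  obtain ⟨δ, hδ, hδp⟩ := Psi_iter_small hψ ⌊Qf φ C₁ c₁ 1⌋₊ ε hε
  refine ⟨min δ 1, lt_min hδ one_pos, fun r hr hrδ => ?_⟩
  have h1 : Bf φ ψ C₁ c₁ r ≤ (Psi ψ)^[⌊Qf φ C₁ c₁ 1⌋₊] (max r 0) :=
    Psi_iter_le_iter hψ (Nat.floor_le_floor (Qf_mono hφ hc₁
      (le_trans hrδ (min_le_right δ 1)))) _
  have h2 : max r 0 = r := max_eq_left hr
  rw [h2] at h1
  exact le_trans h1 (hδp r hr (le_trans hrδ (min_le_left δ 1)))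


lemma Bhat_zero : Bhat φ ψ C₁ c₁ 0 = 0 := by
  rw [Bhat]
  simp

lemma Bhat_avg (hφ : ClassP φ) (hψ : ClassP ψ) (hc₁ : 0 < c₁) {r : ℝ} (hr : 0 < r) :
    Bhat φ ψ C₁ c₁ r = r + ∫ v in (1:ℝ)..2, Bf φ ψ C₁ c₁ (r * v) := by
  rw [Bhat, if_neg (not_le_of_gt hr)]
  congr 1
  rw [intervalIntegral.integral_comp_mul_left (f := Bf φ ψ C₁ c₁) (ne_of_gt hr)]
  rw [mul_one, smul_eq_mul, ← Ff_sub hφ hψ hc₁, mul_comm r 2]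
  rw [div_eq_inv_mul]

lemma Bhat_nonneg (hφ : ClassP φ) (hψ : ClassP ψ) (hc₁ : 0 < c₁) (r : ℝ) :
    0 ≤ Bhat φ ψ C₁ c₁ r := by
  rcases le_or_gt r 0 with h | h
  · rw [Bhat, if_pos h]
  · rw [Bhat_avg hφ hψ hc₁ h]
    have h2 : (0:ℝ) ≤ ∫ v in (1:ℝ)..2, Bf φ ψ C₁ c₁ (r * v) :=
      intervalIntegral.integral_nonneg one_le_two (fun u _ => Bf_nonneg _)
    linarith

lemma comp_mul_int (hφ : ClassP φ) (hψ : ClassP ψ) (hc₁ : 0 < c₁) {r : ℝ} (hr : 0 ≤ r)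
    (a b : ℝ) : IntervalIntegrable (fun v => Bf φ ψ C₁ c₁ (r * v)) volume a b := by
  apply Monotone.intervalIntegrable
  intro x y hxy
  exact Bf_mono hφ hψ hc₁ (mul_le_mul_of_nonneg_left hxy hr)

lemma Bf_le_Bhat (hφ : ClassP φ) (hψ : ClassP ψ) (hc₁ : 0 < c₁) {r : ℝ} (hr : 0 ≤ r) :
    Bf φ ψ C₁ c₁ r ≤ Bhat φ ψ C₁ c₁ r := by
  rcases eq_or_lt_of_le hr with h | h
  · rw [← h, Bhat_zero, Bf, Qf]
    rw [max_self]
    rw [Psi_iter_zero hψ]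
  · rw [Bhat_avg hφ hψ hc₁ h]
    have h2 : ∫ v in (1:ℝ)..2, (fun _ => Bf φ ψ C₁ c₁ r) v
        ≤ ∫ v in (1:ℝ)..2, Bf φ ψ C₁ c₁ (r * v) := by
      apply intervalIntegral.integral_mono_on one_le_two intervalIntegrable_const
        (comp_mul_int hφ hψ hc₁ hr 1 2)
      intro x hx
      apply Bf_mono hφ hψ hc₁
      nlinarith [hx.1]
    rw [intervalIntegral.integral_const, smul_eq_mul] at h2
    have : (2 - 1 : ℝ) * Bf φ ψ C₁ c₁ r = Bf φ ψ C₁ c₁ r := by ring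
    rw [this] at h2
    linarith

lemma Bhat_monoOn (hφ : ClassP φ) (hψ : ClassP ψ) (hc₁ : 0 < c₁) :
    MonotoneOn (Bhat φ ψ C₁ c₁) (Set.Ici 0) := by
  intro a ha b hb hab
  rcases eq_or_lt_of_le (Set.mem_Ici.mp ha : (0:ℝ) ≤ a) with h | h
  · rw [← h, Bhat_zero]
    exact Bhat_nonneg hφ hψ hc₁ b
  · have hbpos : 0 < b := lt_of_lt_of_le h hab
    rw [Bhat_avg hφ hψ hc₁ h, Bhat_avg hφ hψ hc₁ hbpos]
    have h2 : ∫ v in (1:ℝ)..2, Bf φ ψ C₁ c₁ (a * v) ≤ ∫ v in (1:ℝ)..2, Bf φ ψ C₁ c₁ (b * v) := by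
      apply intervalIntegral.integral_mono_on one_le_two
        (comp_mul_int hφ hψ hc₁ (le_of_lt h) 1 2) (comp_mul_int hφ hψ hc₁ (le_of_lt hbpos) 1 2)
      intro x hx
      apply Bf_mono hφ hψ hc₁
      apply mul_le_mul_of_nonneg_right hab (by linarith [hx.1])
    linarith

lemma Bhat_le_lin (hφ : ClassP φ) (hψ : ClassP ψ) (hc₁ : 0 < c₁) {r : ℝ} (hr : 0 < r) :
    Bhat φ ψ C₁ c₁ r ≤ r + Bf φ ψ C₁ c₁ (2*r) := by
  rw [Bhat_avg hφ hψ hc₁ hr]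
  have h2 : ∫ v in (1:ℝ)..2, Bf φ ψ C₁ c₁ (r * v)
      ≤ ∫ v in (1:ℝ)..2, (fun _ => Bf φ ψ C₁ c₁ (2*r)) v := by
    apply intervalIntegral.integral_mono_on one_le_two
      (comp_mul_int hφ hψ hc₁ (le_of_lt hr) 1 2) intervalIntegrable_const
    intro x hx
    apply Bf_mono hφ hψ hc₁
    nlinarith [hx.2]
  rw [intervalIntegral.integral_const, smul_eq_mul] at h2
  have : (2 - 1 : ℝ) * Bf φ ψ C₁ c₁ (2*r) = Bf φ ψ C₁ c₁ (2*r) := by ring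
  rw [this] at h2
  linarith

lemma Bhat_contOn (hφ : ClassP φ) (hψ : ClassP ψ) (hC₁ : 0 < C₁) (hc₁ : 0 < c₁) :
    ContinuousOn (Bhat φ ψ C₁ c₁) (Set.Ici 0) := by
  intro x hx
  rcases eq_or_lt_of_le (Set.mem_Ici.mp hx : (0:ℝ) ≤ x) with h | h
  · -- continuity at 0 within Ici 0
    rw [← h]
    rw [Metric.continuousWithinAt_iff]
    intro ε hε
    obtain ⟨δ, hδ, hδp⟩ := Bf_small hφ hψ hC₁ hc₁ (ε/4) (by linarith)
    refine ⟨min (δ/2) (ε/2), lt_min (by linarith) (by linarith), fun y hy hyd => ?_⟩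
    rw [Real.dist_eq, Bhat_zero, sub_zero]
    rw [Real.dist_eq, sub_zero] at hyd
    have hynn : 0 ≤ y := hy
    rw [abs_of_nonneg hynn] at hyd
    rw [abs_of_nonneg (Bhat_nonneg hφ hψ hc₁ y)]
    rcases eq_or_lt_of_le hynn with h2 | h2
    · rw [← h2, Bhat_zero]; linarith
    · have h3 := Bhat_le_lin (C₁ := C₁) hφ hψ hc₁ h2
      have h4 : Bf φ ψ C₁ c₁ (2*y) ≤ ε/4 := by
        apply hδp _ (by linarith)
        have := lt_of_lt_of_le hyd (min_le_left _ _)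
        linarith
      have := lt_of_lt_of_le hyd (min_le_right _ _)
      linarith
  · -- continuity on Ioi 0
    apply ContinuousWithinAt.mono _ (Set.subset_univ _)
    rw [continuousWithinAt_univ]
    have hg : ContinuousAt (fun r => r + (Ff φ ψ C₁ c₁ (2*r) - Ff φ ψ C₁ c₁ r) / r) x := by
      apply ContinuousAt.add continuousAt_id
      apply ContinuousAt.div
      · exact ((Ff_cont hφ hψ hc₁).comp (continuous_const.mul continuous_id)).continuousAt.sub
          (Ff_cont hφ hψ hc₁).continuousAt
      · exact continuousAt_id
      · exact ne_of_gt h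
    apply hg.congr
    filter_upwards [Ioi_mem_nhds h] with y hy
    rw [Bhat, if_neg (not_le_of_gt hy)]


/-- The KL bound function. -/
def betaF (φ ψ : ℝ → ℝ) (C₁ c₁ : ℝ) : ℝ → ℝ → ℝ := fun r u =>
  min (Bhat φ ψ C₁ c₁ r)
    (Vinv φ (min (V φ (max r 1) + C₁ - c₁ * u) (V φ (1 + Bhat φ ψ C₁ c₁ r))))
  + r * Real.exp (-u)

variable (hφ : ClassP φ) (hψ : ClassP ψ) (hC₁ : 0 < C₁) (hc₁ : 0 < c₁)

lemma oneBhat_pos (hφ : ClassP φ) (hψ : ClassP ψ) (hc₁ : 0 < c₁) (r : ℝ) :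
    0 < 1 + Bhat φ ψ C₁ c₁ r := by
  linarith [Bhat_nonneg (C₁ := C₁) hφ hψ hc₁ r]

lemma arg_le (hφ : ClassP φ) (hψ : ClassP ψ) (hc₁ : 0 < c₁) (r u : ℝ) :
    min (V φ (max r 1) + C₁ - c₁ * u) (V φ (1 + Bhat φ ψ C₁ c₁ r))
      ≤ V φ (1 + Bhat φ ψ C₁ c₁ r) := min_le_right _ _

lemma minterm_nonneg (hφ : ClassP φ) (hψ : ClassP ψ) (hc₁ : 0 < c₁) (r u : ℝ) :
    0 ≤ min (Bhat φ ψ C₁ c₁ r)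
      (Vinv φ (min (V φ (max r 1) + C₁ - c₁ * u) (V φ (1 + Bhat φ ψ C₁ c₁ r)))) :=
  le_min (Bhat_nonneg hφ hψ hc₁ r)
    (Vinv_nonneg hφ (oneBhat_pos hφ hψ hc₁ r) (arg_le hφ hψ hc₁ r u))

lemma minterm_mono_r (hφ : ClassP φ) (hψ : ClassP ψ) (hc₁ : 0 < c₁) (u : ℝ)
    {r1 r2 : ℝ} (hr1 : 0 ≤ r1) (hr12 : r1 ≤ r2) :
    min (Bhat φ ψ C₁ c₁ r1)
      (Vinv φ (min (V φ (max r1 1) + C₁ - c₁ * u) (V φ (1 + Bhat φ ψ C₁ c₁ r1))))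
    ≤ min (Bhat φ ψ C₁ c₁ r2)
      (Vinv φ (min (V φ (max r2 1) + C₁ - c₁ * u) (V φ (1 + Bhat φ ψ C₁ c₁ r2)))) := by
  have hBm : Bhat φ ψ C₁ c₁ r1 ≤ Bhat φ ψ C₁ c₁ r2 :=
    Bhat_monoOn hφ hψ hc₁ hr1 (le_trans hr1 hr12) hr12
  apply min_le_min hBm
  apply Vinv_mono hφ _ (oneBhat_pos hφ hψ hc₁ r2) (arg_le hφ hψ hc₁ r2 u)
  apply min_le_min
  · have := Vmax_mono hφ hr12
    simp only at this
    linarith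
  · exact V_mono hφ (oneBhat_pos hφ hψ hc₁ r1) (by linarith)

lemma minterm_anti_u (hφ : ClassP φ) (hψ : ClassP ψ) (hc₁ : 0 < c₁) (r : ℝ)
    {u1 u2 : ℝ} (hu : u1 ≤ u2) :
    min (Bhat φ ψ C₁ c₁ r)
      (Vinv φ (min (V φ (max r 1) + C₁ - c₁ * u2) (V φ (1 + Bhat φ ψ C₁ c₁ r))))
    ≤ min (Bhat φ ψ C₁ c₁ r)
      (Vinv φ (min (V φ (max r 1) + C₁ - c₁ * u1) (V φ (1 + Bhat φ ψ C₁ c₁ r)))) := by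
  apply min_le_min le_rfl
  apply Vinv_mono hφ _ (oneBhat_pos hφ hψ hc₁ r) (arg_le hφ hψ hc₁ r u1)
  apply min_le_min _ le_rfl
  have : c₁ * u1 ≤ c₁ * u2 := mul_le_mul_of_nonneg_left hu (le_of_lt hc₁)
  linarith

lemma betaF_zero (hφ : ClassP φ) (hψ : ClassP ψ) (hc₁ : 0 < c₁) (u : ℝ) :
    betaF φ ψ C₁ c₁ 0 u = 0 := by
  rw [betaF, Bhat_zero]
  have hX : 0 ≤ Vinv φ (min (V φ (max 0 1) + C₁ - c₁ * u) (V φ (1 + 0))) :=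
    Vinv_nonneg hφ (by norm_num : (0:ℝ) < 1 + 0) (min_le_right _ _)
  rw [min_eq_left hX]
  ring

lemma betaF_KL (hφ : ClassP φ) (hψ : ClassP ψ) (hC₁ : 0 < C₁) (hc₁ : 0 < c₁) :
    ClassKL (betaF φ ψ C₁ c₁) := by
  refine ⟨?_, ?_, ?_, ?_, ?_⟩
  · -- joint continuity
    have hBc : ContinuousOn (fun q : ℝ × ℝ => Bhat φ ψ C₁ c₁ q.1) (Set.Ici 0 ×ˢ Set.Ici 0) :=
      (Bhat_contOn hφ hψ hC₁ hc₁).comp continuous_fst.continuousOn (fun q hq => hq.1)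
    have hAc : Continuous (fun q : ℝ × ℝ => V φ (max q.1 1) + C₁ - c₁ * q.2) :=
      (((Vmax_cont hφ).comp continuous_fst).add continuous_const).sub
        (continuous_const.mul continuous_snd)
    have hWc : ContinuousOn (fun q : ℝ × ℝ => V φ (1 + Bhat φ ψ C₁ c₁ q.1))
        (Set.Ici 0 ×ˢ Set.Ici 0) := by
      apply (V_continuousOn hφ).comp (continuousOn_const.add hBc)
      intro q hq
      exact oneBhat_pos hφ hψ hc₁ q.1
    have hmin2 : Continuous (fun y : ℝ × ℝ => min y.1 y.2) := continuous_fst.min continuous_snd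
    have hminc : ContinuousOn (fun q : ℝ × ℝ =>
        min (V φ (max q.1 1) + C₁ - c₁ * q.2) (V φ (1 + Bhat φ ψ C₁ c₁ q.1)))
        (Set.Ici 0 ×ˢ Set.Ici 0) :=
      hmin2.comp_continuousOn (hAc.continuousOn.prodMk hWc)
    have hVinvC : ContinuousOn (Vinv φ) {y : ℝ | ∃ c, 0 < c ∧ y < V φ c} :=
      fun y hy => (Vinv_continuousAt hφ hy).continuousWithinAt
    have hcomp : ContinuousOn (fun q : ℝ × ℝ =>
        Vinv φ (min (V φ (max q.1 1) + C₁ - c₁ * q.2) (V φ (1 + Bhat φ ψ C₁ c₁ q.1))))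
        (Set.Ici 0 ×ˢ Set.Ici 0) := by
      apply hVinvC.comp hminc
      intro q hq
      have hb := Bhat_nonneg (C₁ := C₁) hφ hψ hc₁ q.1
      refine ⟨2 + Bhat φ ψ C₁ c₁ q.1, by linarith, ?_⟩
      apply lt_of_le_of_lt (min_le_right _ _)
      exact V_strictMono hφ (by simp only [Set.mem_Ioi]; linarith)
        (by simp only [Set.mem_Ioi]; linarith) (by linarith)
    have hmin2b : Continuous (fun y : ℝ × ℝ => min y.1 y.2) := continuous_fst.min continuous_snd
    exact (hmin2b.comp_continuousOn (hBc.prodMk hcomp)).add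
      ((continuous_fst.mul ((Real.continuous_exp).comp continuous_snd.neg)).continuousOn)
  · -- nonnegativity
    intro r t hr ht
    have h1 := minterm_nonneg (C₁ := C₁) hφ hψ hc₁ r t
    have h2 : 0 ≤ r * Real.exp (-t) := mul_nonneg hr (le_of_lt (Real.exp_pos _))
    rw [betaF]
    linarith
  · -- strict monotonicity in r and vanishing at 0
    intro t ht
    refine ⟨?_, betaF_zero hφ hψ hc₁ t⟩
    intro r1 hr1 r2 hr2 h12
    have h1 := minterm_mono_r (C₁ := C₁) hφ hψ hc₁ t hr1 (le_of_lt h12)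
    have h2 : r1 * Real.exp (-t) < r2 * Real.exp (-t) :=
      mul_lt_mul_of_pos_right h12 (Real.exp_pos _)
    simp only [betaF]
    linarith
  · -- strict decrease in u while positive
    intro r hr t1 t2 ht1 ht12 hpos
    rcases eq_or_lt_of_le hr with h | h
    · rw [← h, betaF_zero hφ hψ hc₁ t1] at hpos
      exact absurd hpos (lt_irrefl 0)
    · have h1 := minterm_anti_u (C₁ := C₁) hφ hψ hc₁ r (le_of_lt ht12)
      have h2 : r * Real.exp (-t2) < r * Real.exp (-t1) := by
        apply mul_lt_mul_of_pos_left _ h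
        exact Real.exp_lt_exp.mpr (by linarith)
      simp only [betaF]
      linarith
  · -- convergence to 0
    intro r hr
    have hterm2 : Tendsto (fun u : ℝ => r * Real.exp (-u)) atTop (nhds 0) := by
      have h := Real.tendsto_exp_neg_atTop_nhds_zero.const_mul r
      simpa using h
    have harg : Tendsto (fun u : ℝ =>
        min (V φ (max r 1) + C₁ - c₁ * u) (V φ (1 + Bhat φ ψ C₁ c₁ r))) atTop atBot := by
      apply tendsto_atBot_mono (fun u => min_le_left _ _)
      have h1 : Tendsto (fun u : ℝ => c₁ * u) atTop atTop :=
        Tendsto.const_mul_atTop hc₁ tendsto_id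
      have h2 : Tendsto (fun u : ℝ => -(c₁ * u)) atTop atBot :=
        tendsto_neg_atTop_atBot.comp h1
      have h3 := tendsto_atBot_add_const_left atTop (V φ (max r 1) + C₁) h2
      have heq : (fun u : ℝ => V φ (max r 1) + C₁ - c₁ * u)
          = fun u : ℝ => V φ (max r 1) + C₁ + -(c₁ * u) := by
        funext u; ring
      rw [heq]
      exact h3
    have hterm1 : Tendsto (fun u : ℝ => min (Bhat φ ψ C₁ c₁ r)
        (Vinv φ (min (V φ (max r 1) + C₁ - c₁ * u) (V φ (1 + Bhat φ ψ C₁ c₁ r)))))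
        atTop (nhds 0) := by
      apply squeeze_zero (fun u => minterm_nonneg hφ hψ hc₁ r u)
        (fun u => min_le_right _ _)
      exact (Vinv_tendsto_atBot hφ).comp harg
    have := hterm1.add hterm2
    simpa [betaF] using this

/-- Domination: the master estimates imply the `betaF` bound. -/
lemma le_betaF (hφ : ClassP φ) (hψ : ClassP ψ) (hC₁ : 0 < C₁) (hc₁ : 0 < c₁)
    {r u x : ℝ} (hr : 0 ≤ r) (hu : 0 ≤ u)
    (hx1 : x ≤ Bf φ ψ C₁ c₁ r)
    (hx2 : x = 0 ∨ (0 < x ∧ 0 < r ∧ V φ x ≤ V φ r + C₁ - c₁ * u)) :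
    x ≤ betaF φ ψ C₁ c₁ r u := by
  have hxmin : x ≤ min (Bhat φ ψ C₁ c₁ r)
      (Vinv φ (min (V φ (max r 1) + C₁ - c₁ * u) (V φ (1 + Bhat φ ψ C₁ c₁ r)))) := by
    apply le_min (le_trans hx1 (Bf_le_Bhat hφ hψ hc₁ hr))
    rcases hx2 with h | ⟨hxpos, hrpos, hV⟩
    · rw [h]
      exact Vinv_nonneg hφ (oneBhat_pos hφ hψ hc₁ r) (arg_le hφ hψ hc₁ r u)
    · apply le_Vinv hφ hxpos _ (oneBhat_pos hφ hψ hc₁ r) (arg_le hφ hψ hc₁ r u)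
      apply le_min
      · have h1 : V φ r ≤ V φ (max r 1) := V_mono hφ hrpos (le_max_left r 1)
        linarith
      · apply V_mono hφ hxpos
        have h2 := Bf_le_Bhat (C₁ := C₁) hφ hψ hc₁ hr
        linarith
  have h2 : 0 ≤ r * Real.exp (-u) := mul_nonneg hr (le_of_lt (Real.exp_pos _))
  rw [betaF]
  linarith

end Beta

end P1

set_option maxHeartbeats 2000000 in
/-- Proposition 1 a): if `ψ, φ` are of class `P`, `p` is nonnegative and locally
integrable, `θ > 0` satisfies `M < N`, and `M > 0`, then the comparison system is strongly
GUAS uniformly over every uniform subset `S` of `Sup(1/θ)`. -/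
theorem prop1a (φ ψ p : ℝ → ℝ) (θ : ℝ) (hφ : ClassP φ) (hψ : ClassP ψ)
    (hp : LocIntNN p) (hθ : 0 < θ) (hMN : Mval φ ψ < Nval p θ) (hM : 0 < Mval φ ψ)
    (S : Set (Set ℝ)) (hS : USubSup (1 / θ) S) :
    StrongGUAS p φ ψ S := by
  classical
  open P1 in
  set M := Mval φ ψ with hMdef
  set N := Nval p θ with hNdef
  have hN0 : 0 < N := lt_trans hM hMN
  set ε₀ := (N - M)/(2*M*θ) with hε₀def
  have hε₀ : 0 < ε₀ := by
    apply div_pos (by linarith) (by positivity)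
  obtain ⟨T₀, hT₀pos, hT₀⟩ := hS.2 ε₀ hε₀
  set nstar := (1/θ + ε₀) * T₀ with hnstardef
  have hρε : 0 < 1/θ + ε₀ := by positivity
  have hnstar : 0 < nstar := by positivity
  set c₀ := (N - M)/(2*θ) with hc₀def
  have hc₀ : 0 < c₀ := div_pos (by linarith) (by positivity)
  set K := 1 + 1/θ + ε₀ with hKdef
  have hK : 0 < K := by positivity
  set c₁ := c₀ / K with hc₁def
  have hc₁ : 0 < c₁ := div_pos hc₀ hK
  set C₁ := N + nstar * M + c₀ * nstar / K with hC₁def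
  have hC₁ : 0 < C₁ := by positivity
  refine ⟨P1.betaF φ ψ C₁ c₁, P1.betaF_KL hφ hψ hC₁ hc₁, ?_⟩
  intro γ hγS t0 ht00 z0 hz00 T z hsol t ht htT
  have hγ : IsImpulseSeq γ := hS.1 γ hγS
  set n := impCnt γ t0 t with hndef
  set u := t - t0 + (n:ℝ) with hudef
  have hu0 : 0 ≤ u := by
    have : (0:ℝ) ≤ (n:ℝ) := Nat.cast_nonneg n
    simp only [hudef]
    linarith
  -- case z0 = 0
  rcases eq_or_lt_of_le hz00 with hz0eq | hz0pos
  · have hzt : z t = 0 := by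
      apply P1.absorb hφ hψ hp hsol ht00 hγ (impCnt γ t0 t) t0 t le_rfl ht htT rfl
      rw [hsol.init, ← hz0eq]
    apply P1.le_betaF hφ hψ hC₁ hc₁ hz00 hu0
    · rw [hzt]; exact P1.Bf_nonneg _
    · exact Or.inl hzt
  -- z0 > 0 : use the master estimate
  have hmaster := P1.master hφ hψ hp hsol ht00 hγ hM hz0pos n t ht htT rfl
  -- count bound
  have hcount : (n:ℝ) ≤ (1/θ + ε₀) * (t - t0) + nstar := by
    rcases le_or_gt T₀ (t - t0) with hcase | hcase
    · have h1 := hT₀ γ hγS (t - t0) hcase t0 ht00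
      have heq : t0 + (t - t0) = t := by ring
      rw [heq] at h1
      have hΔpos : 0 < t - t0 := lt_of_lt_of_le hT₀pos hcase
      rw [div_le_iff₀ hΔpos] at h1
      rw [← hndef] at h1
      nlinarith
    · have h1 := hT₀ γ hγS T₀ le_rfl t0 ht00
      rw [div_le_iff₀ hT₀pos] at h1
      have h2 : (n:ℝ) ≤ (impCnt γ t0 (t0 + T₀) : ℝ) := by
        apply Nat.cast_le.mpr
        apply Set.ncard_le_ncard
        · apply Set.inter_subset_inter_right
          apply Set.Ioc_subset_Ioc le_rfl
          linarith
        · exact (hγ.2 (t0 + T₀)).subset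
            (Set.inter_subset_inter_right γ Set.Ioc_subset_Iic_self)
      have h3 : (0:ℝ) ≤ (1/θ + ε₀) * (t - t0) :=
        mul_nonneg (le_of_lt hρε) (by linarith)
      simp only [hnstardef]
      nlinarith
  -- key constant identity
  have hkey1 : (1/θ + ε₀) * M - N/θ = -c₀ := by
    rw [hε₀def, hc₀def]
    field_simp
    ring
  -- V-estimate with the final constants
  have hVest : z t = 0 ∨ (0 < z t ∧ V φ (z t) ≤ V φ z0 + C₁ - c₁ * u) := by
    rcases hmaster with h | ⟨hpos, hV, _⟩
    · exact Or.inl h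
    right
    refine ⟨hpos, ?_⟩
    have hwin := P1.window_bound hp hθ (le_of_lt hN0) ht00 ht
    rw [← hNdef] at hwin
    have h1 : (n:ℝ) * M ≤ ((1/θ + ε₀) * (t - t0) + nstar) * M :=
      mul_le_mul_of_nonneg_right hcount (le_of_lt hM)
    have h2 : ((1/θ + ε₀) * (t - t0) + nstar) * M - ((t - t0)/θ - 1) * N
        = (t - t0) * ((1/θ + ε₀) * M - N/θ) + nstar * M + N := by ring
    rw [hkey1] at h2
    have h3 : (u - nstar) / K ≤ t - t0 := by
      rw [div_le_iff₀ hK]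
      have : (n:ℝ) ≤ (1/θ + ε₀) * (t - t0) + nstar := hcount
      simp only [hudef, hKdef]
      nlinarith
    have h4 : c₀ * ((u - nstar)/K) = c₁ * u - c₀ * nstar / K := by
      rw [hc₁def]
      field_simp
      skip
    have h5 : c₀ * ((u - nstar)/K) ≤ c₀ * (t - t0) :=
      mul_le_mul_of_nonneg_left h3 (le_of_lt hc₀)
    have h6 : V φ (z t) ≤ V φ z0 + (n:ℝ) * M - ((t - t0)/θ - 1) * N := by
      rw [← hMdef] at hV
      linarith
    simp only [hC₁def]
    nlinarith
  -- Bf bound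
  have hQnn := P1.Qf_nonneg (C₁ := C₁) (c₁ := c₁) hφ hC₁ hc₁ z0
  have hBf : z t ≤ P1.Bf φ ψ C₁ c₁ z0 := by
    rcases hmaster with h | ⟨hpos, hV, hiter⟩
    · rw [h]; exact P1.Bf_nonneg _
    rcases le_or_gt u (P1.Qf φ C₁ c₁ z0) with hcase | hcase
    · -- few impulses: envelope bound
      have hn : n ≤ ⌊P1.Qf φ C₁ c₁ z0⌋₊ := by
        apply Nat.le_floor
        have : (n:ℝ) ≤ u := by
          simp only [hudef]
          linarith
        linarith
      calc z t ≤ (P1.Psi ψ)^[n] z0 := hiter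
      _ ≤ (P1.Psi ψ)^[⌊P1.Qf φ C₁ c₁ z0⌋₊] z0 := P1.Psi_iter_le_iter hψ hn z0
      _ ≤ (P1.Psi ψ)^[⌊P1.Qf φ C₁ c₁ z0⌋₊] (max z0 0) :=
          P1.Psi_iter_mono hψ _ (le_max_left z0 0)
      _ = P1.Bf φ ψ C₁ c₁ z0 := rfl
    · -- past the threshold: V bound
      rcases hVest with h0 | ⟨hpos2, hVC⟩
      · rw [h0]; exact P1.Bf_nonneg _
      have hVQ : V φ (z t) ≤ V φ z0 + C₁ - c₁ * P1.Qf φ C₁ c₁ z0 := by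
        have : c₁ * P1.Qf φ C₁ c₁ z0 ≤ c₁ * u :=
          mul_le_mul_of_nonneg_left (le_of_lt hcase) (le_of_lt hc₁)
        linarith
      have hQval : c₁ * P1.Qf φ C₁ c₁ z0 = V φ (max z0 1) + C₁ - V φ 1 := by
        rw [P1.Qf]
        field_simp
      rw [hQval] at hVQ
      rcases le_or_gt z0 1 with hz01 | hz01
      · have hmax : max z0 1 = 1 := max_eq_right hz01
        rw [hmax] at hVQ
        have : V φ (z t) ≤ V φ z0 := by linarith
        have hle := (P1.V_le_iff hφ hpos2 hz0pos).mp this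
        exact le_trans hle (P1.le_Bf z0)
      · have hmax : max z0 1 = z0 := max_eq_left (le_of_lt hz01)
        rw [hmax] at hVQ
        have : V φ (z t) ≤ V φ 1 := by linarith
        have hle := (P1.V_le_iff hφ hpos2 one_pos).mp this
        exact le_trans hle (le_trans (le_of_lt hz01) (P1.le_Bf z0))
  -- conclude
  apply P1.le_betaF hφ hψ hC₁ hc₁ hz00 hu0 hBf
  rcases hVest with h | ⟨h1, h2⟩
  · exact Or.inl h
  · exact Or.inr ⟨h1, hz0pos, h2⟩
end
end

section
/- Let ψ, φ be of class P, let p : ℝ≥0 → ℝ≥0 be locally integrable, and let θ > 0 be such that M := sup_{a>0} ∫_a^{ψ(a)} ds/φ(s) < inf_{t≥0} ∫_t^{t+θ} p(s) ds =: N. If M < 0 < N, then the comparison system is strongly GUAS uniformly over S = Γ. -/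
open Set Filter MeasureTheory

noncomputable section

namespace Prop1cAux


lemma cp_nonneg {φ : ℝ → ℝ} (hφ : ClassP φ) {x : ℝ} (hx : 0 ≤ x) : 0 ≤ φ x := by
  rcases hx.eq_or_lt with h | h
  · rw [← h, hφ.2.1]
  · exact (hφ.2.2 x h).le

lemma psi_lt_self {φ ψ : ℝ → ℝ} (hφ : ClassP φ) (hM : Mval φ ψ < 0) :
    ∀ a : ℝ, 0 < a → ψ a < a := by
  intro a ha
  by_contra h
  push_neg at h
  have hnn : (0:ℝ) ≤ ∫ s in a..(ψ a), 1 / φ s := by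
    apply intervalIntegral.integral_nonneg h
    intro u hu
    have : 0 < φ u := hφ.2.2 u (lt_of_lt_of_le ha hu.1)
    positivity
  have hbdd : BddAbove {y : ℝ | ∃ a : ℝ, 0 < a ∧ y = ∫ s in a..(ψ a), 1 / φ s} := by
    by_contra hb
    rw [Mval, Real.sSup_of_not_bddAbove hb] at hM
    exact lt_irrefl 0 hM
  have hle : (∫ s in a..(ψ a), 1 / φ s) ≤ Mval φ ψ := le_csSup hbdd ⟨a, ha, rfl⟩
  linarith

lemma Nval_le {p : ℝ → ℝ} {θ : ℝ} (hp : LocIntNN p) (hθ : 0 < θ) :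
    ∀ t : ℝ, 0 ≤ t → Nval p θ ≤ ∫ s in t..(t + θ), p s := by
  intro t ht
  apply csInf_le
  · refine ⟨0, ?_⟩
    rintro y ⟨u, hu, rfl⟩
    exact intervalIntegral.integral_nonneg (by linarith) (fun x _ => hp.1 x)
  · exact ⟨t, ht, rfl⟩

lemma integral_p_ge {p : ℝ → ℝ} {θ : ℝ} (hp : LocIntNN p) (hθ : 0 < θ) (n : ℕ) :
    ∀ a : ℝ, 0 ≤ a → ∀ b : ℝ, a + n * θ ≤ b → Nval p θ * n ≤ ∫ s in a..b, p s := by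
  induction n with
  | zero =>
    intro a ha b hb
    simp only [Nat.cast_zero, mul_zero, zero_mul]
    exact intervalIntegral.integral_nonneg (by push_cast at hb; linarith) (fun x _ => hp.1 x)
  | succ n ih =>
    intro a ha b hb
    have hnn : (0:ℝ) ≤ n := Nat.cast_nonneg n
    have hb' : a + θ + n * θ ≤ b := by push_cast at hb; linarith
    have hab : a + θ ≤ b := by nlinarith
    have h1 : IntervalIntegrable p volume a (a + θ) := hp.2 a (a + θ) ha (by linarith)
    have h2 : IntervalIntegrable p volume (a + θ) b := hp.2 (a + θ) b (by linarith) hab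
    rw [← intervalIntegral.integral_add_adjacent_intervals h1 h2]
    have hA := Nval_le hp hθ a ha
    have hB := ih (a + θ) (by linarith) b hb'
    push_cast
    linarith





variable {p φ ψ : ℝ → ℝ} {γ : Set ℝ} {t0 : ℝ} {T : EReal} {z0 : ℝ} {z : ℝ → ℝ}

lemma coe_lt_T {x t : ℝ} (hxt : x ≤ t) (htT : (t : EReal) < T) : (x : EReal) < T :=
  lt_of_le_of_lt (EReal.coe_le_coe_iff.2 hxt) htT

/-- Between impulses, `z` is nonincreasing. -/
lemma flow_nonincr (hφ : ClassP φ) (hp : LocIntNN p)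
    (sol : IsCompSol p φ ψ γ t0 T z0 z)
    {a b : ℝ} (ha : t0 ≤ a) (hab : a ≤ b) (hbT : (b : EReal) < T)
    (hfree : γ ∩ Set.Ioc a b = ∅) : z b ≤ z a := by
  have h := (sol.flow_int a b ha hab hbT hfree).2
  have hnn : 0 ≤ ∫ s in a..b, p s * φ (z s) := by
    apply intervalIntegral.integral_nonneg hab
    intro u hu
    exact mul_nonneg (hp.1 u)
      (cp_nonneg hφ (sol.nonneg u (le_trans ha hu.1) (coe_lt_T hu.2 hbT)))
  linarith

lemma impulse_finite (hγ : IsImpulseSeq γ) (s t : ℝ) : (γ ∩ Set.Ioc s t).Finite :=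
  (hγ.2 t).subset (fun x hx => ⟨hx.1, hx.2.2⟩)

/-- `z` is nonincreasing on the whole domain. -/
lemma sol_mono (hφ : ClassP φ) (hp : LocIntNN p)
    (hψlt : ∀ a : ℝ, 0 < a → ψ a < a) (hψ0 : ψ 0 = 0)
    (hγ : IsImpulseSeq γ) (sol : IsCompSol p φ ψ γ t0 T z0 z) :
    ∀ n : ℕ, ∀ s t : ℝ, t0 ≤ s → s ≤ t → (t : EReal) < T →
      (γ ∩ Set.Ioc s t).ncard ≤ n → z t ≤ z s := by
  intro n
  induction n with
  | zero =>
    intro s t hs hst htT hcard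
    have hfin := impulse_finite hγ s t
    have : γ ∩ Set.Ioc s t = ∅ := by
      rw [← Set.ncard_eq_zero hfin] at *
      omega
    exact flow_nonincr hφ hp sol hs hst htT this
  | succ n ih =>
    intro s t hs hst htT hcard
    have hfin := impulse_finite hγ s t
    rcases eq_or_ne (γ ∩ Set.Ioc s t) ∅ with hemp | hne
    · exact flow_nonincr hφ hp sol hs hst htT hemp
    · have hne' : (γ ∩ Set.Ioc s t).Nonempty := Set.nonempty_iff_ne_empty.2 hne
      set τ := sSup (γ ∩ Set.Ioc s t) with hτdef
      have hτmem : τ ∈ γ ∩ Set.Ioc s t := Set.Nonempty.csSup_mem hne' hfin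
      have hτmax : ∀ x ∈ γ ∩ Set.Ioc s t, x ≤ τ := fun x hx => le_csSup hfin.bddAbove hx
      have hsτ : s < τ := hτmem.2.1
      have hτt : τ ≤ t := hτmem.2.2
      have hτT : (τ : EReal) < T := coe_lt_T hτt htT
      obtain ⟨L, hLtend, hjump⟩ := sol.jump τ hτmem.1 (lt_of_le_of_lt hs hsτ) hτT
      -- for v ∈ Ioo s τ : z v ≤ z s and 0 ≤ z v
      have hv : ∀ v ∈ Set.Ioo s τ, z v ≤ z s ∧ 0 ≤ z v := by
        intro v hv
        have hvT : (v : EReal) < T := coe_lt_T (le_trans hv.2.le hτt) htT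
        have hsub : γ ∩ Set.Ioc s v ⊆ (γ ∩ Set.Ioc s t) \ {τ} := by
          intro x hx
          refine ⟨⟨hx.1, hx.2.1, le_trans hx.2.2 (le_trans hv.2.le hτt)⟩, ?_⟩
          intro hxτ
          rw [Set.mem_singleton_iff] at hxτ
          have := hx.2.2
          rw [hxτ] at this
          exact absurd this (not_le.2 hv.2)
        have hlt : ((γ ∩ Set.Ioc s t) \ {τ}).ncard < (γ ∩ Set.Ioc s t).ncard :=
          Set.ncard_lt_ncard (by
            refine ⟨Set.diff_subset, fun hsub2 => ?_⟩
            exact absurd (hsub2 hτmem).2 (by simp)) hfin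
        have hcard' : (γ ∩ Set.Ioc s v).ncard ≤ n := by
          have := Set.ncard_le_ncard hsub hfin.diff
          omega
        exact ⟨ih s v hs hv.1.le hvT hcard', sol.nonneg v (le_trans hs hv.1.le) hvT⟩
      have hIoo : Set.Ioo s τ ∈ nhdsWithin τ (Set.Iio τ) :=
        Ioo_mem_nhdsLT_of_mem ⟨hsτ, le_refl τ⟩
      have hLle : L ≤ z s :=
        le_of_tendsto hLtend (Filter.eventually_of_mem hIoo (fun v hv' => (hv v hv').1))
      have hLnn : 0 ≤ L :=
        ge_of_tendsto hLtend (Filter.eventually_of_mem hIoo (fun v hv' => (hv v hv').2))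
      have hψL : ψ L ≤ L := by
        rcases hLnn.eq_or_lt with h | h
        · rw [← h, hψ0]
        · exact (hψlt L h).le
      have hzτ : z τ ≤ z s := le_trans hjump (le_trans hψL hLle)
      have hfree : γ ∩ Set.Ioc τ t = ∅ := by
        ext x
        simp only [Set.mem_inter_iff, Set.mem_Ioc, Set.mem_empty_iff_false, iff_false]
        rintro ⟨hxγ, hx1, hx2⟩
        exact absurd (hτmax x ⟨hxγ, lt_trans hsτ hx1, hx2⟩) (not_le.2 hx1)
      exact le_trans (flow_nonincr hφ hp sol (le_trans hs hsτ.le) hτt htT hfree) hzτ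


/-- On an impulse-free interval where `z` stays in `[ε, r]`,
`z` decreases at least at rate `m ∫ p`. -/
lemma flow_decay (hp : LocIntNN p) (sol : IsCompSol p φ ψ γ t0 T z0 z) (ht00 : 0 ≤ t0)
    {a b ε r m : ℝ} (ha : t0 ≤ a) (hab : a ≤ b) (hbT : (b : EReal) < T)
    (hfree : γ ∩ Set.Ioc a b = ∅)
    (hm : ∀ x ∈ Set.Icc ε r, m ≤ φ x)
    (hz : ∀ x ∈ Set.Icc a b, z x ∈ Set.Icc ε r) :
    z b ≤ z a - m * ∫ s in a..b, p s := by
  obtain ⟨hint1, h⟩ := sol.flow_int a b ha hab hbT hfree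
  have hintp : IntervalIntegrable p volume a b := hp.2 a b (le_trans ht00 ha) hab
  have hmono : (∫ s in a..b, m * p s) ≤ ∫ s in a..b, p s * φ (z s) := by
    apply intervalIntegral.integral_mono_on hab (hintp.const_mul m) hint1
    intro x hx
    have h1 : m ≤ φ (z x) := hm _ (hz x hx)
    have h2 : 0 ≤ p x := hp.1 x
    nlinarith
  rw [intervalIntegral.integral_const_mul] at hmono
  linarith

lemma tendsto_primitive (hp : LocIntNN p) {a τ : ℝ} (ha : 0 ≤ a) (haτ : a < τ) :
    Tendsto (fun v => ∫ s in a..v, p s) (nhdsWithin τ (Set.Iio τ))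
      (nhds (∫ s in a..τ, p s)) := by
  have hint : IntegrableOn p (Set.uIcc a τ) volume := by
    rw [Set.uIcc_of_le haτ.le]
    exact (intervalIntegrable_iff_integrableOn_Icc_of_le haτ.le).1 (hp.2 a τ ha haτ.le)
  have hcont := intervalIntegral.continuousOn_primitive_interval hint
  have hτmem : τ ∈ Set.uIcc a τ := by
    rw [Set.uIcc_of_le haτ.le]; exact Set.right_mem_Icc.2 haτ.le
  have h := hcont τ hτmem
  rw [← nhdsWithin_Ioo_eq_nhdsLT haτ]
  exact h.mono_left (nhdsWithin_mono τ (by rw [Set.uIcc_of_le haτ.le]; exact Set.Ioo_subset_Icc_self))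

/-- Main quantitative decay: while `z > ε`, `z` drops by `m∫p` along flows and by `δ` at
each impulse. -/
lemma sol_decay (hφ : ClassP φ) (hp : LocIntNN p)
    (hψlt : ∀ a : ℝ, 0 < a → ψ a < a) (hψ0 : ψ 0 = 0)
    (hγ : IsImpulseSeq γ) (sol : IsCompSol p φ ψ γ t0 T z0 z) (ht00 : 0 ≤ t0)
    {ε r m δ : ℝ} (hz0r : z0 ≤ r)
    (hm : ∀ x ∈ Set.Icc ε r, m ≤ φ x) (hδ : ∀ x ∈ Set.Icc ε r, δ ≤ x - ψ x) :
    ∀ n : ℕ, ∀ t : ℝ, t0 ≤ t → (t : EReal) < T →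
      (∀ x : ℝ, t0 ≤ x → x ≤ t → ε < z x) →
      (γ ∩ Set.Ioc t0 t).ncard ≤ n →
      z t ≤ z t0 - m * (∫ s in t0..t, p s) - δ * ((γ ∩ Set.Ioc t0 t).ncard : ℝ) := by
  have hzler : ∀ x : ℝ, t0 ≤ x → (x : EReal) < T → z x ≤ r := by
    intro x hx hxT
    have := sol_mono hφ hp hψlt hψ0 hγ sol ((γ ∩ Set.Ioc t0 x).ncard) t0 x le_rfl hx hxT le_rfl
    rw [sol.init] at this
    linarith
  intro n
  induction n with
  | zero =>
    intro t ht htT hgt hcard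
    have hfin := impulse_finite hγ t0 t
    have hemp : γ ∩ Set.Ioc t0 t = ∅ := by rw [← Set.ncard_eq_zero hfin]; omega
    rw [hemp]
    simp only [Set.ncard_empty, Nat.cast_zero, mul_zero, sub_zero]
    exact flow_decay hp sol ht00 le_rfl ht htT hemp hm
      (fun x hx => ⟨(hgt x hx.1 hx.2).le, hzler x hx.1 (coe_lt_T hx.2 htT)⟩)
  | succ n ih =>
    intro t ht htT hgt hcard
    have hfin := impulse_finite hγ t0 t
    rcases eq_or_ne (γ ∩ Set.Ioc t0 t) ∅ with hemp | hne
    · rw [hemp]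
      simp only [Set.ncard_empty, Nat.cast_zero, mul_zero, sub_zero]
      exact flow_decay hp sol ht00 le_rfl ht htT hemp hm
        (fun x hx => ⟨(hgt x hx.1 hx.2).le, hzler x hx.1 (coe_lt_T hx.2 htT)⟩)
    · have hne' : (γ ∩ Set.Ioc t0 t).Nonempty := Set.nonempty_iff_ne_empty.2 hne
      set S := γ ∩ Set.Ioc t0 t with hSdef
      set τ := sSup S with hτdef
      have hτmem : τ ∈ S := Set.Nonempty.csSup_mem hne' hfin
      have hτmax : ∀ x ∈ S, x ≤ τ := fun x hx => le_csSup hfin.bddAbove hx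
      have ht0τ : t0 < τ := hτmem.2.1
      have hτt : τ ≤ t := hτmem.2.2
      have hτT : (τ : EReal) < T := coe_lt_T hτt htT
      obtain ⟨L, hLtend, hjump⟩ := sol.jump τ hτmem.1 ht0τ hτT
      set S' := S \ {τ} with hS'def
      have hfinS' : S'.Finite := hfin.diff
      have hcardS : S'.ncard + 1 = S.ncard := Set.ncard_diff_singleton_add_one hτmem hfin
      set w := sSup (insert t0 S') with hwdef
      have hfinw : (insert t0 S').Finite := hfinS'.insert t0
      have hw : t0 ≤ w ∧ w < τ ∧ ∀ x ∈ S', x ≤ w := by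
        have hmem : w ∈ insert t0 S' :=
          Set.Nonempty.csSup_mem (Set.insert_nonempty _ _) hfinw
        refine ⟨le_csSup hfinw.bddAbove (Set.mem_insert _ _), ?_,
          fun x hx => le_csSup hfinw.bddAbove (Set.mem_insert_of_mem _ hx)⟩
        rcases hmem with h' | h'
        · rw [h']; exact ht0τ
        · rcases (hτmax _ h'.1).lt_or_eq with h'' | h''
          · exact h''
          · exact absurd h'' h'.2
      -- for v ∈ Ioo w τ : γ ∩ Ioc t0 v = S'
      have hSv : ∀ v ∈ Set.Ioo w τ, γ ∩ Set.Ioc t0 v = S' := by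
        intro v hv
        apply Set.Subset.antisymm
        · intro x hx
          refine ⟨⟨hx.1, hx.2.1, le_trans hx.2.2 (le_trans hv.2.le hτt)⟩, ?_⟩
          intro hxτ
          rw [Set.mem_singleton_iff] at hxτ
          have := hx.2.2
          rw [hxτ] at this
          exact absurd this (not_le.2 hv.2)
        · intro x hx
          exact ⟨hx.1.1, hx.1.2.1, le_trans (hw.2.2 x hx) hv.1.le⟩
      have hIoo : Set.Ioo w τ ∈ nhdsWithin τ (Set.Iio τ) :=
        Ioo_mem_nhdsLT_of_mem ⟨hw.2.1, le_refl τ⟩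
      have hcards' : S'.ncard ≤ n := by omega
      -- inductive bound for v ∈ Ioo w τ
      have hvbound : ∀ v ∈ Set.Ioo w τ,
          z v ≤ z t0 - m * (∫ s in t0..v, p s) - δ * (S'.ncard : ℝ) := by
        intro v hv
        have hvt : v ≤ t := le_trans hv.2.le hτt
        have hvT : (v : EReal) < T := coe_lt_T hvt htT
        have := ih v (le_trans hw.1 hv.1.le) hvT
          (fun x hx1 hx2 => hgt x hx1 (le_trans hx2 hvt))
          (by rw [hSv v hv]; exact hcards')
        rwa [hSv v hv] at this
      -- limit of the bound
      have htendC : Tendsto (fun v => z t0 - m * (∫ s in t0..v, p s) - δ * (S'.ncard : ℝ))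
          (nhdsWithin τ (Set.Iio τ))
          (nhds (z t0 - m * (∫ s in t0..τ, p s) - δ * (S'.ncard : ℝ))) := by
        exact ((tendsto_const_nhds.sub
          ((tendsto_primitive hp ht00 ht0τ).const_mul m)).sub tendsto_const_nhds)
      have hLle : L ≤ z t0 - m * (∫ s in t0..τ, p s) - δ * (S'.ncard : ℝ) :=
        le_of_tendsto_of_tendsto hLtend htendC
          (Filter.eventually_of_mem hIoo (fun v hv => hvbound v hv))
      have hLε : ε ≤ L :=
        ge_of_tendsto hLtend (Filter.eventually_of_mem hIoo (fun v hv =>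
          (hgt v (le_trans hw.1 hv.1.le) (le_trans hv.2.le hτt)).le))
      have hLr : L ≤ r :=
        le_of_tendsto hLtend (Filter.eventually_of_mem hIoo (fun v hv =>
          hzler v (le_trans hw.1 hv.1.le) (coe_lt_T (le_trans hv.2.le hτt) htT)))
      have hzτ : z τ ≤ z t0 - m * (∫ s in t0..τ, p s) - δ * (S.ncard : ℝ) := by
        have h1 : δ ≤ L - ψ L := hδ L ⟨hLε, hLr⟩
        have h2 : z τ ≤ ψ L := hjump
        have : ((S.ncard : ℝ)) = (S'.ncard : ℝ) + 1 := by
          rw [← hcardS]; push_cast; ring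
        rw [this]
        linarith
      -- flow from τ to t
      have hfree : γ ∩ Set.Ioc τ t = ∅ := by
        ext x
        simp only [Set.mem_inter_iff, Set.mem_Ioc, Set.mem_empty_iff_false, iff_false]
        rintro ⟨hxγ, hx1, hx2⟩
        exact absurd (hτmax x ⟨hxγ, lt_trans ht0τ hx1, hx2⟩) (not_le.2 hx1)
      have hflow : z t ≤ z τ - m * ∫ s in τ..t, p s :=
        flow_decay hp sol ht00 ht0τ.le hτt htT hfree hm
          (fun x hx => ⟨(hgt x (le_trans ht0τ.le hx.1) hx.2).le,
            hzler x (le_trans ht0τ.le hx.1) (coe_lt_T hx.2 htT)⟩)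
      have hadd : (∫ s in t0..τ, p s) + (∫ s in τ..t, p s) = ∫ s in t0..t, p s :=
        intervalIntegral.integral_add_adjacent_intervals
          (hp.2 t0 τ ht00 ht0τ.le) (hp.2 τ t (le_trans ht00 ht0τ.le) hτt)
      calc z t ≤ z τ - m * ∫ s in τ..t, p s := hflow
        _ ≤ (z t0 - m * (∫ s in t0..τ, p s) - δ * (S.ncard : ℝ)) - m * ∫ s in τ..t, p s := by
            linarith
        _ = z t0 - m * (∫ s in t0..t, p s) - δ * (S.ncard : ℝ) := by
            rw [← hadd]; ring


/-- While `z > ε`, the total elapsed time plus impulse count is bounded. -/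
lemma sol_escape (hφ : ClassP φ) (hp : LocIntNN p) (hθ : 0 < θ)
    (hψlt : ∀ a : ℝ, 0 < a → ψ a < a) (hψ0 : ψ 0 = 0)
    (hγ : IsImpulseSeq γ) (sol : IsCompSol p φ ψ γ t0 T z0 z) (ht00 : 0 ≤ t0)
    {ε r m δ : ℝ} (hε : 0 < ε) (hmpos : 0 < m) (hδpos : 0 < δ)
    (hN : 0 < Nval p θ) (hz0r : z0 ≤ r)
    (hm : ∀ x ∈ Set.Icc ε r, m ≤ φ x) (hδ : ∀ x ∈ Set.Icc ε r, δ ≤ x - ψ x)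
    {t : ℝ} (ht : t0 ≤ t) (htT : (t : EReal) < T)
    (hgt : ∀ x : ℝ, t0 ≤ x → x ≤ t → ε < z x) :
    (t - t0) + ((γ ∩ Set.Ioc t0 t).ncard : ℝ) ≤ θ * (r / (m * Nval p θ) + 1) + r / δ := by
  set N := Nval p θ
  set k : ℝ := ((γ ∩ Set.Ioc t0 t).ncard : ℝ)
  have hk0 : 0 ≤ k := Nat.cast_nonneg _
  have hdec := sol_decay hφ hp hψlt hψ0 hγ sol ht00 hz0r hm hδ
    ((γ ∩ Set.Ioc t0 t).ncard) t ht htT hgt le_rfl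
  have hεt : ε < z t := hgt t ht le_rfl
  have hzt0 : z t0 = z0 := sol.init
  have hInn : 0 ≤ ∫ s in t0..t, p s :=
    intervalIntegral.integral_nonneg ht (fun x _ => hp.1 x)
  -- m∫ + δk ≤ r
  have hkey : m * (∫ s in t0..t, p s) + δ * k ≤ r := by
    have : ε < z t0 - m * (∫ s in t0..t, p s) - δ * k := lt_of_lt_of_le hεt hdec
    have hz0r' : z t0 ≤ r := by rw [hzt0]; exact hz0r
    linarith
  have hkbound : k ≤ r / δ := by
    rw [le_div_iff₀ hδpos]
    nlinarith
  set nfl := ⌊(t - t0) / θ⌋₊ with hnfl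
  have hdiv0 : 0 ≤ (t - t0) / θ := div_nonneg (by linarith) hθ.le
  have hfl1 : (nfl : ℝ) * θ ≤ t - t0 := by
    have := Nat.floor_le hdiv0
    calc (nfl : ℝ) * θ ≤ ((t - t0) / θ) * θ := by nlinarith
      _ = t - t0 := by field_simp
  have hint := integral_p_ge hp hθ nfl t0 ht00 t (by linarith)
  have hnflb : (nfl : ℝ) ≤ r / (m * N) := by
    rw [le_div_iff₀ (by positivity)]
    nlinarith
  have hfl2 : t - t0 < ((nfl : ℝ) + 1) * θ := by
    have := Nat.lt_floor_add_one ((t - t0) / θ)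
    calc t - t0 = ((t - t0) / θ) * θ := by field_simp
      _ < ((nfl : ℝ) + 1) * θ := by nlinarith
  have : t - t0 ≤ θ * (r / (m * N) + 1) := by nlinarith
  linarith

/-- For each level `k ≥ 1` there is a uniform attraction threshold `D`. -/
lemma existsD (hφ : ClassP φ) (hψP : ClassP ψ) (hp : LocIntNN p) (hθ : 0 < θ)
    (hψlt : ∀ a : ℝ, 0 < a → ψ a < a) (hN : 0 < Nval p θ) :
    ∀ k : ℕ, 1 ≤ k → ∃ D : ℝ,
      ∀ γ : Set ℝ, IsImpulseSeq γ → ∀ t0 : ℝ, 0 ≤ t0 → ∀ z0 : ℝ, 0 ≤ z0 → z0 ≤ (k : ℝ) →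
      ∀ (T : EReal) (z : ℝ → ℝ), IsCompSol p φ ψ γ t0 T z0 z →
      ∀ t : ℝ, t0 ≤ t → (t : EReal) < T →
      D ≤ (t - t0) + ((γ ∩ Set.Ioc t0 t).ncard : ℝ) → z t ≤ 1 / (k : ℝ) := by
  intro k hk
  have hψ0 : ψ 0 = 0 := hψP.2.1
  have hk1 : (1 : ℝ) ≤ (k : ℝ) := by exact_mod_cast hk
  set ε : ℝ := 1 / (k : ℝ) with hεdef
  set r : ℝ := (k : ℝ) with hrdef
  have hε : 0 < ε := by positivity
  have hεr : ε ≤ r := by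
    rw [hεdef, hrdef]
    calc (1 : ℝ) / k ≤ 1 := by
          rw [div_le_one (by positivity)]; exact hk1
      _ ≤ (k : ℝ) := hk1
  have hsub : Set.Icc ε r ⊆ Set.Ici 0 := fun x hx => le_trans hε.le hx.1
  have hne : (Set.Icc ε r).Nonempty := Set.nonempty_Icc.2 hεr
  obtain ⟨xm, hxm, hxmin⟩ := isCompact_Icc.exists_isMinOn hne (hφ.1.mono hsub)
  set m := φ xm with hmdef
  have hmpos : 0 < m := hφ.2.2 xm (lt_of_lt_of_le hε hxm.1)
  have hm : ∀ x ∈ Set.Icc ε r, m ≤ φ x := fun x hx => hxmin hx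
  obtain ⟨xd, hxd, hxdmin⟩ := isCompact_Icc.exists_isMinOn hne
    ((continuousOn_id.sub (hψP.1.mono hsub)) : ContinuousOn (fun x => x - ψ x) (Set.Icc ε r))
  set δ := xd - ψ xd with hδdef
  have hδpos : 0 < δ := sub_pos.2 (hψlt xd (lt_of_lt_of_le hε hxd.1))
  have hδ : ∀ x ∈ Set.Icc ε r, δ ≤ x - ψ x := fun x hx => hxdmin hx
  refine ⟨θ * (r / (m * Nval p θ) + 1) + r / δ + 1, ?_⟩
  intro γ hγ t0 ht00 z0 hz00 hz0r T z sol t ht htT hD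
  have hex : ∃ x : ℝ, t0 ≤ x ∧ x ≤ t ∧ z x ≤ ε := by
    by_contra h
    push_neg at h
    have hesc := sol_escape hφ hp hθ hψlt hψ0 hγ sol ht00 hε hmpos hδpos hN hz0r hm hδ
      ht htT (fun x hx1 hx2 => h x hx1 hx2)
    linarith
  obtain ⟨x, hx1, hx2, hx3⟩ := hex
  have := sol_mono hφ hp hψlt hψ0 hγ sol ((γ ∩ Set.Ioc x t).ncard) x t hx1 hx2 htT le_rfl
  linarith




/-! ### clamp -/

def clamp (x : ℝ) : ℝ := max 0 (min 1 x)

lemma clamp_nonneg (x : ℝ) : 0 ≤ clamp x := le_max_left _ _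

lemma clamp_le_one (x : ℝ) : clamp x ≤ 1 := max_le zero_le_one (min_le_left _ _)

lemma clamp_mono : Monotone clamp := fun x y h =>
  max_le_max le_rfl (min_le_min le_rfl h)

lemma clamp_continuous : Continuous clamp :=
  continuous_const.max (continuous_const.min continuous_id)

lemma clamp_of_one_le {x : ℝ} (h : 1 ≤ x) : clamp x = 1 := by
  rw [clamp, min_eq_left h, max_eq_right zero_le_one]

lemma clamp_of_nonpos {x : ℝ} (h : x ≤ 0) : clamp x = 0 := by
  rw [clamp, max_eq_left]
  exact le_trans (min_le_right _ _) h

/-! ### the telescoping series `a j = 1/(j+1) - 1/(j+2)` -/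

def aseq (j : ℕ) : ℝ := 1 / ((j : ℝ) + 1) - 1 / ((j : ℝ) + 2)

lemma aseq_nonneg (j : ℕ) : 0 ≤ aseq j := by
  have h1 : (0:ℝ) < (j:ℝ) + 1 := by positivity
  have h2 : (0:ℝ) < (j:ℝ) + 2 := by positivity
  rw [aseq, sub_nonneg]
  apply one_div_le_one_div_of_le h1
  linarith

lemma summable_aseq : Summable aseq := by
  apply summable_of_sum_range_le (c := 1) (fun n => aseq_nonneg n)
  intro n
  have h := Finset.sum_range_sub' (fun i => 1 / ((i : ℝ) + 1)) n
  have heq : ∀ i ∈ Finset.range n, aseq i = 1 / ((i:ℝ)+1) - 1 / (((i+1:ℕ):ℝ)+1) := by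
    intro i _
    rw [aseq]
    push_cast
    ring
  rw [Finset.sum_congr rfl heq, h]
  have : (0:ℝ) ≤ 1 / ((n:ℝ) + 1) := by positivity
  norm_num
  linarith

lemma tsum_aseq_tail (k : ℕ) : ∑' j : ℕ, aseq (j + k) = 1 / ((k : ℝ) + 1) := by
  have hsum : Summable (fun j => aseq (j + k)) := (summable_nat_add_iff k).2 summable_aseq
  have h1 : Tendsto (fun n => ∑ i ∈ Finset.range n, aseq (i + k)) atTop
      (nhds (∑' j : ℕ, aseq (j + k))) := hsum.hasSum.tendsto_sum_nat
  have h2 : ∀ n, ∑ i ∈ Finset.range n, aseq (i + k)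
      = 1 / ((k:ℝ) + 1) - 1 / ((n:ℝ) + (k:ℝ) + 1) := by
    intro n
    have h := Finset.sum_range_sub' (fun i => 1 / ((i : ℝ) + (k:ℝ) + 1)) n
    have heq : ∀ i ∈ Finset.range n, aseq (i + k)
        = 1 / ((i:ℝ) + (k:ℝ) + 1) - 1 / (((i+1:ℕ):ℝ) + (k:ℝ) + 1) := by
      intro i _
      rw [aseq]
      push_cast
      ring
    rw [Finset.sum_congr rfl heq]
    push_cast
    push_cast at h
    rw [h]
    norm_num
  have h3 : Tendsto (fun n : ℕ => 1 / ((k:ℝ) + 1) - 1 / ((n:ℝ) + (k:ℝ) + 1)) atTop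
      (nhds (1 / ((k:ℝ) + 1))) := by
    have hz : Tendsto (fun n : ℕ => 1 / ((n:ℝ) + (k:ℝ) + 1)) atTop (nhds 0) := by
      simp only [one_div]
      apply Filter.Tendsto.inv_tendsto_atTop
      apply tendsto_atTop_add_const_right
      apply tendsto_atTop_add_const_right
      exact tendsto_natCast_atTop_atTop
    simpa using tendsto_const_nhds.sub hz
  have h4 := h3.congr (fun n => (h2 n).symm)
  exact tendsto_nhds_unique h1 h4

lemma summable_aseq_ite (k : ℕ) : Summable (fun j : ℕ => if k ≤ j then aseq j else 0) := by
  apply Summable.of_nonneg_of_le _ _ summable_aseq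
  · intro j; split <;> simp [aseq_nonneg]
  · intro j; split
    · exact le_rfl
    · exact aseq_nonneg j

lemma tsum_aseq_ite (k : ℕ) :
    ∑' j : ℕ, (if k ≤ j then aseq j else 0) = 1 / ((k : ℝ) + 1) := by
  have h := Summable.sum_add_tsum_nat_add (f := fun j : ℕ => if k ≤ j then aseq j else 0) k
    (summable_aseq_ite k)
  have h1 : ∑ i ∈ Finset.range k, (if k ≤ i then aseq i else 0) = 0 := by
    apply Finset.sum_eq_zero
    intro i hi
    rw [Finset.mem_range] at hi
    rw [if_neg (by omega)]
  have h2 : (fun i : ℕ => if k ≤ i + k then aseq (i + k) else 0) = fun i => aseq (i + k) := by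
    funext i
    rw [if_pos (by omega)]
  rw [h1, h2] at h
  rw [← h, zero_add, tsum_aseq_tail]

/-! ### continuous monotone majorant of a sequence -/

lemma exists_cont_majorant (f : ℕ → ℝ) :
    ∃ A : ℝ → ℝ, Continuous A ∧ Monotone A ∧ (∀ x, 0 ≤ A x) ∧ ∀ k : ℕ, f k ≤ A k := by
  -- running max, nonnegative
  set g : ℕ → ℝ := fun k => (Finset.range (k+1)).sup' (by simp) (fun j => max (f j) 0) with hg
  have hg0 : ∀ k, 0 ≤ g k := by
    intro k
    exact le_trans (le_max_right (f k) 0)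
      (Finset.le_sup' (fun j => max (f j) 0) (by simp : k ∈ Finset.range (k+1)))
  have hgf : ∀ k, f k ≤ g k := by
    intro k
    exact le_trans (le_max_left (f k) 0)
      (Finset.le_sup' (fun j => max (f j) 0) (by simp : k ∈ Finset.range (k+1)))
  have hgm : Monotone g := by
    apply monotone_nat_of_le_succ
    intro k
    apply Finset.sup'_le
    intro j hj
    apply Finset.le_sup' (fun j => max (f j) 0)
    rw [Finset.mem_range] at hj ⊢
    omega
  set ms : ℕ → ℝ := fun k => g k / (1 + g k) with hms
  have hms01 : ∀ k, 0 ≤ ms k ∧ ms k < 1 := by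
    intro k
    constructor
    · apply div_nonneg (hg0 k); linarith [hg0 k]
    · rw [div_lt_one (by linarith [hg0 k])]; linarith
  have hmsm : Monotone ms := by
    intro i j hij
    have hi := hg0 i; have hj := hg0 j
    have := hgm hij
    rw [hms]
    rw [div_le_div_iff₀ (by linarith) (by linarith)]
    nlinarith
  set s : ℕ → ℝ := fun k => max (ms k) (1 - (1/2)^k) with hs
  have hs01 : ∀ k, 0 ≤ s k ∧ s k < 1 := by
    intro k
    constructor
    · exact le_trans (hms01 k).1 (le_max_left _ _)
    · apply max_lt (hms01 k).2
      have : (0:ℝ) < (1/2)^k := by positivity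
      linarith
  have hsmono : Monotone s := by
    intro i j hij
    apply max_le_max (hmsm hij)
    have : ((1:ℝ)/2)^j ≤ (1/2)^i := by
      apply pow_le_pow_of_le_one (by norm_num) (by norm_num) hij
    linarith
  set b : ℕ → ℝ := fun k => s (k+1) - s k with hb
  have hb0 : ∀ k, 0 ≤ b k := fun k => sub_nonneg.2 (hsmono (Nat.le_succ k))
  have hbsum : Summable b := by
    apply summable_of_sum_range_le (c := 1) hb0
    intro n
    rw [hb]
    rw [Finset.sum_range_sub (fun k => s k) n]
    have := (hs01 n).2
    have := (hs01 0).1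
    linarith
  set B : ℝ → ℝ := fun x => ∑' k : ℕ, b k * clamp (x - k) with hB
  have hBsummable : ∀ x, Summable (fun k => b k * clamp (x - k)) := by
    intro x
    apply Summable.of_nonneg_of_le
      (fun k => mul_nonneg (hb0 k) (clamp_nonneg _)) _ hbsum
    intro k
    calc b k * clamp (x - k) ≤ b k * 1 := by
          apply mul_le_mul_of_nonneg_left (clamp_le_one _) (hb0 k)
      _ = b k := mul_one _
  have hBcont : Continuous B := by
    apply continuous_tsum (u := b) _ hbsum
    · intro k x
      rw [Real.norm_eq_abs, abs_of_nonneg (mul_nonneg (hb0 k) (clamp_nonneg _))]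
      calc b k * clamp (x - k) ≤ b k * 1 :=
            mul_le_mul_of_nonneg_left (clamp_le_one _) (hb0 k)
        _ = b k := mul_one _
    · intro k
      exact continuous_const.mul (clamp_continuous.comp (continuous_id.sub continuous_const))
  have hBmono : Monotone B := by
    intro x y hxy
    apply Summable.tsum_le_tsum _ (hBsummable x) (hBsummable y)
    intro k
    exact mul_le_mul_of_nonneg_left (clamp_mono (by linarith)) (hb0 k)
  have hBnonneg : ∀ x, 0 ≤ B x :=
    fun x => tsum_nonneg (fun k => mul_nonneg (hb0 k) (clamp_nonneg _))
  -- value at natural number N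
  have hBN : ∀ N : ℕ, B N = s N - s 0 := by
    intro N
    have : B N = ∑ k ∈ Finset.range N, b k * clamp ((N:ℝ) - k) := by
      apply tsum_eq_sum
      intro k hk
      rw [Finset.mem_range, not_lt] at hk
      rw [clamp_of_nonpos, mul_zero]
      have : (N:ℝ) ≤ k := by exact_mod_cast hk
      linarith
    rw [this]
    have heq : ∀ k ∈ Finset.range N, b k * clamp ((N:ℝ) - k) = s (k+1) - s k := by
      intro k hk
      rw [Finset.mem_range] at hk
      rw [clamp_of_one_le, mul_one]
      have : (k:ℝ) + 1 ≤ N := by exact_mod_cast hk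
      linarith
    rw [Finset.sum_congr rfl heq, Finset.sum_range_sub (fun k => s k)]
  -- B x + s 0 < 1
  have hBlt : ∀ x, s 0 + B x < 1 := by
    intro x
    have h1 : B x ≤ B ⌈x⌉₊ := hBmono (Nat.le_ceil x)
    rw [hBN] at h1
    have := (hs01 ⌈x⌉₊).2
    linarith
  have hBge : ∀ x, 0 ≤ s 0 + B x := fun x => by
    have := (hs01 0).1; have := hBnonneg x; linarith
  refine ⟨fun x => (s 0 + B x) / (1 - (s 0 + B x)), ?_, ?_, ?_, ?_⟩
  · apply Continuous.div (continuous_const.add hBcont)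
      (continuous_const.sub (continuous_const.add hBcont))
    intro x
    show (1:ℝ) - (s 0 + B x) ≠ 0
    have := hBlt x
    linarith
  · intro x y hxy
    have hx1 := hBlt x; have hy1 := hBlt y
    have hx0 := hBge x; have hy0 := hBge y
    have hBle := hBmono hxy
    rw [div_le_div_iff₀ (by linarith) (by linarith)]
    nlinarith
  · intro x
    have h1 := hBlt x; have h2 := hBge x
    exact div_nonneg h2 (by linarith)
  · intro k
    show f k ≤ (s 0 + B (k:ℝ)) / (1 - (s 0 + B (k:ℝ)))
    have hBk : s 0 + B (k:ℝ) = s k := by rw [hBN]; ring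
    rw [hBk]
    have h1 : ms k ≤ s k := le_max_left _ _
    have h2 := (hs01 k).2
    have h3 := (hms01 k).1
    have hg1 : (0:ℝ) < 1 + g k := by linarith [hg0 k]
    have key : g k ≤ s k / (1 - s k) := by
      rw [le_div_iff₀ (by linarith)]
      have : ms k * (1 + g k) = g k := by rw [hms]; field_simp
      nlinarith
    exact le_trans (hgf k) key

/-! ### the function `Phi` -/

def Phi (D : ℕ → ℝ) (u : ℝ) : ℝ :=
  ∑' j : ℕ, aseq j * clamp ((D (j+3) - u) / (D (j+3) - D (j+2)))

lemma Dden_pos {D : ℕ → ℝ} (hDgap : ∀ k, D k + 1 ≤ D (k+1)) (j : ℕ) :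
    0 < D (j+3) - D (j+2) := by
  have := hDgap (j+2); linarith

lemma Dmono {D : ℕ → ℝ} (hDgap : ∀ k, D k + 1 ≤ D (k+1)) : Monotone D := by
  apply monotone_nat_of_le_succ
  intro k
  have := hDgap k; linarith

lemma phi_term_nonneg {D : ℕ → ℝ} (u : ℝ) (j : ℕ) :
    0 ≤ aseq j * clamp ((D (j+3) - u) / (D (j+3) - D (j+2))) :=
  mul_nonneg (aseq_nonneg j) (clamp_nonneg _)

lemma phi_term_le {D : ℕ → ℝ} (u : ℝ) (j : ℕ) :
    aseq j * clamp ((D (j+3) - u) / (D (j+3) - D (j+2))) ≤ aseq j := by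
  calc aseq j * clamp _ ≤ aseq j * 1 :=
        mul_le_mul_of_nonneg_left (clamp_le_one _) (aseq_nonneg j)
    _ = aseq j := mul_one _

lemma phi_summable {D : ℕ → ℝ} (u : ℝ) :
    Summable (fun j : ℕ => aseq j * clamp ((D (j+3) - u) / (D (j+3) - D (j+2)))) :=
  Summable.of_nonneg_of_le (phi_term_nonneg u) (phi_term_le u) summable_aseq

lemma phi_nonneg {D : ℕ → ℝ} (u : ℝ) : 0 ≤ Phi D u := tsum_nonneg (phi_term_nonneg u)

lemma phi_continuous {D : ℕ → ℝ} : Continuous (Phi D) := by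
  apply continuous_tsum (u := aseq) _ summable_aseq
  · intro j x
    rw [Real.norm_eq_abs, abs_of_nonneg (phi_term_nonneg x j)]
    exact phi_term_le x j
  · intro j
    exact continuous_const.mul (clamp_continuous.comp
      ((continuous_const.sub continuous_id).div_const _))

lemma phi_anti {D : ℕ → ℝ} (hDgap : ∀ k, D k + 1 ≤ D (k+1)) : Antitone (Phi D) := by
  intro u v huv
  apply Summable.tsum_le_tsum _ (phi_summable v) (phi_summable u)
  intro j
  apply mul_le_mul_of_nonneg_left _ (aseq_nonneg j)
  apply clamp_mono
  have hd := Dden_pos hDgap j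
  rw [div_le_div_iff₀ hd hd]
  nlinarith

lemma phi_ge {D : ℕ → ℝ} (hDgap : ∀ k, D k + 1 ≤ D (k+1)) (K : ℕ) {u : ℝ}
    (h : u ≤ D (K+2)) : 1 / ((K:ℝ)+1) ≤ Phi D u := by
  rw [← tsum_aseq_ite K]
  apply Summable.tsum_le_tsum _ (summable_aseq_ite K) (phi_summable u)
  intro j
  by_cases hj : K ≤ j
  · rw [if_pos hj]
    have harg : 1 ≤ (D (j+3) - u) / (D (j+3) - D (j+2)) := by
      rw [le_div_iff₀ (Dden_pos hDgap j)]
      have : D (K+2) ≤ D (j+2) := Dmono hDgap (by omega)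
      linarith
    rw [clamp_of_one_le harg, mul_one]
  · rw [if_neg hj]
    exact phi_term_nonneg u j

lemma phi_le {D : ℕ → ℝ} (hDgap : ∀ k, D k + 1 ≤ D (k+1)) (K : ℕ) {u : ℝ}
    (h : D (K+3) ≤ u) : Phi D u ≤ 1 / ((K:ℝ)+1) := by
  rw [← tsum_aseq_ite K]
  apply Summable.tsum_le_tsum _ (phi_summable u) (summable_aseq_ite K)
  intro j
  by_cases hj : K ≤ j
  · rw [if_pos hj]
    exact phi_term_le u j
  · rw [if_neg hj]
    have harg : (D (j+3) - u) / (D (j+3) - D (j+2)) ≤ 0 := by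
      apply div_nonpos_of_nonpos_of_nonneg
      · have : D (j+3) ≤ D (K+3) := Dmono hDgap (by omega)
        linarith
      · exact (Dden_pos hDgap j).le
    rw [clamp_of_nonpos harg, mul_zero]

lemma phi_tendsto {D : ℕ → ℝ} (hDgap : ∀ k, D k + 1 ≤ D (k+1)) (hDk : ∀ k : ℕ, (k:ℝ) ≤ D k) :
    Tendsto (Phi D) atTop (nhds 0) := by
  rw [NormedAddCommGroup.tendsto_nhds_zero]
  intro ε hε
  obtain ⟨K, hK⟩ := exists_nat_one_div_lt hε
  filter_upwards [eventually_ge_atTop (D (K+3))] with u hu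
  rw [Real.norm_eq_abs, abs_of_nonneg (phi_nonneg u)]
  exact lt_of_le_of_lt (phi_le hDgap K hu) hK


/-! ### abstract KL bound -/

open Classical in
lemma kl_bound {D : ℕ → ℝ} (hDgap : ∀ k, D k + 1 ≤ D (k+1)) (hDk : ∀ k : ℕ, (k:ℝ) ≤ D k)
    {R : ℝ → ℝ} (hRD : ∀ r : ℝ, D ⌈max r 1⌉₊ ≤ R r) (hR0 : ∀ r, 0 ≤ R r)
    {y r s : ℝ} (hr : 0 ≤ r) (hyr : y ≤ r)
    (H : ∀ j : ℕ, 1 ≤ j → r ≤ (j:ℝ) → D j ≤ s → y ≤ 1 / (j:ℝ)) :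
    y ≤ min r (Phi D (max (s - R r) 0) + r * max (1 - max (s - R r) 0) 0) := by
  have hD0 : ∀ k, 0 ≤ D k := fun k => le_trans (Nat.cast_nonneg k) (hDk k)
  set u := max (s - R r) 0 with hu
  have hu0 : 0 ≤ u := le_max_right _ _
  set κ := ⌈max r 1⌉₊ with hκ
  have hκ1 : 1 ≤ κ := by
    rw [hκ]
    exact Nat.one_le_ceil_iff.2 (lt_of_lt_of_le zero_lt_one (le_max_right r 1))
  have hrκ : r ≤ (κ:ℝ) := le_trans (le_max_left r 1) (Nat.le_ceil _)
  refine le_min hyr ?_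
  rcases eq_or_lt_of_le hu0 with h0 | hpos
  · -- u = 0
    rw [← h0]
    have h1 : max (1 - (0:ℝ)) 0 = 1 := by norm_num
    rw [h1, mul_one]
    have := phi_nonneg (D := D) 0
    linarith
  · -- u > 0, so s - R r = u > 0 and s ≥ R r ≥ D κ
    have husr : u = s - R r := by
      rcases max_cases (s - R r) (0:ℝ) with ⟨h1, h2⟩ | ⟨h1, h2⟩
      · exact h1
      · rw [hu] at hpos; rw [h1] at hpos; linarith [hpos]
    have hsR : R r < s := by rw [husr] at hpos; linarith
    have hsκ : D κ ≤ s := le_trans (hRD r) hsR.le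
    have hterm : 0 ≤ r * max (1 - u) 0 :=
      mul_nonneg hr (le_max_right _ _)
    by_cases hcase : u ≤ D 2
    · -- Phi u ≥ 1 and y ≤ 1/κ ≤ 1
      have hκpos : (0:ℝ) < (κ:ℝ) := by exact_mod_cast Nat.lt_of_lt_of_le Nat.zero_lt_one hκ1
      have hy1 : y ≤ 1 := by
        have h := H κ hκ1 hrκ hsκ
        have h2 : (1:ℝ)/(κ:ℝ) ≤ 1 := by
          rw [div_le_one hκpos]
          exact_mod_cast hκ1
        linarith
      have hphi : 1 ≤ Phi D u := by
        have h := phi_ge hDgap 0 (by simpa using hcase)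
        simpa using h
      linarith
    · push_neg at hcase
      have hPu : D 2 ≤ u := hcase.le
      have h2b : (2:ℕ) ≤ ⌊u⌋₊ := by
        have h2u : (2:ℝ) ≤ u := le_trans (hDk 2) hPu
        exact Nat.le_floor (by exact_mod_cast h2u)
      set k := Nat.findGreatest (fun k => D k ≤ u) ⌊u⌋₊ with hkdef
      have hk2 : 2 ≤ k := Nat.le_findGreatest (P := fun k => D k ≤ u) h2b hPu
      have hPk : D k ≤ u := Nat.findGreatest_spec (P := fun k => D k ≤ u) h2b hPu
      have hk1 : u < D (k+1) := by
        by_cases hkb : k + 1 ≤ ⌊u⌋₊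
        · by_contra hcon
          push_neg at hcon
          exact Nat.findGreatest_is_greatest (P := fun k => D k ≤ u) (Nat.lt_succ_self k) hkb hcon
        · push_neg at hkb
          have hfl : u < (⌊u⌋₊:ℝ) + 1 := Nat.lt_floor_add_one u
          have h2 : ((⌊u⌋₊:ℝ)) + 1 ≤ (k:ℝ) + 1 := by
            have : ⌊u⌋₊ ≤ k := by omega
            have := (Nat.cast_le (α := ℝ)).2 this
            linarith
          have h3 : ((k:ℝ)+1) ≤ D (k+1) := by
            have := hDk (k+1)
            push_cast at this
            linarith
          linarith
      set j := max k κ with hjdef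
      have hDj : D j ≤ D k + D κ := by
        rcases le_total k κ with h | h
        · have hj : j = κ := max_eq_right h
          rw [hj]; linarith [hD0 k]
        · have hj : j = k := max_eq_left h
          rw [hj]; linarith [hD0 κ]
      have hs' : D j ≤ s := by
        have hsu : s = u + R r := by rw [husr]; ring
        have h2 := hRD r
        rw [hsu]
        linarith [hPk]
      have hyj : y ≤ 1/(j:ℝ) := by
        apply H j (by omega) _ hs'
        exact le_trans hrκ (by exact_mod_cast le_max_right k κ)
      have hphi : 1/(k:ℝ) ≤ Phi D u := by
        have hule : u ≤ D (k - 1 + 2) := by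
          have he : k - 1 + 2 = k + 1 := by omega
          rw [he]; exact hk1.le
        have h := phi_ge hDgap (k-1) hule
        have hc : ((k-1:ℕ):ℝ) + 1 = (k:ℝ) := by
          have h1 : (1:ℕ) ≤ k := by omega
          rw [Nat.cast_sub h1]
          push_cast
          ring
        rwa [hc] at h
      have h1jk : (1:ℝ)/(j:ℝ) ≤ 1/(k:ℝ) := by
        apply one_div_le_one_div_of_le
        · exact_mod_cast Nat.lt_of_lt_of_le Nat.zero_lt_two hk2
        · exact_mod_cast le_max_left k κ
      linarith


end Prop1cAux

/-- Proposition 1 c): if `ψ, φ` are of class `P`, `p` is nonnegative and locally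
integrable, `θ > 0` satisfies `M < N`, and `M < 0 < N`, then the comparison system is
strongly GUAS uniformly over `S = Γ`. -/
theorem prop1c (φ ψ p : ℝ → ℝ) (θ : ℝ) (hφ : ClassP φ) (hψ : ClassP ψ)
    (hp : LocIntNN p) (hθ : 0 < θ) (hMN : Mval φ ψ < Nval p θ)
    (hM : Mval φ ψ < 0) (hN : 0 < Nval p θ) :
    StrongGUAS p φ ψ {γ : Set ℝ | IsImpulseSeq γ} := by
  classical
  open Prop1cAux in
  -- basic consequences
  have hψlt : ∀ a : ℝ, 0 < a → ψ a < a := Prop1cAux.psi_lt_self hφ hM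
  have hψ0 : ψ 0 = 0 := hψ.2.1
  -- attraction thresholds
  have H : ∀ k : ℕ, ∃ Dk : ℝ, 1 ≤ k →
      ∀ γ : Set ℝ, IsImpulseSeq γ → ∀ t0 : ℝ, 0 ≤ t0 → ∀ z0 : ℝ, 0 ≤ z0 → z0 ≤ (k : ℝ) →
      ∀ (T : EReal) (z : ℝ → ℝ), IsCompSol p φ ψ γ t0 T z0 z →
      ∀ t : ℝ, t0 ≤ t → (t : EReal) < T →
      Dk ≤ (t - t0) + ((γ ∩ Set.Ioc t0 t).ncard : ℝ) → z t ≤ 1 / (k : ℝ) := by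
    intro k
    by_cases h : 1 ≤ k
    · obtain ⟨D, hD⟩ := Prop1cAux.existsD hφ hψ hp hθ hψlt hN k h
      exact ⟨D, fun _ => hD⟩
    · exact ⟨0, fun h' => absurd h' h⟩
  choose need hneed using H
  obtain ⟨A, hAc, hAm, hA0, hAf⟩ := Prop1cAux.exists_cont_majorant need
  set D : ℕ → ℝ := fun k => A k + k with hDdef
  have hDgap : ∀ k, D k + 1 ≤ D (k + 1) := by
    intro k
    have h1 : A k ≤ A (k + 1) := hAm (by exact_mod_cast Nat.le_succ k)
    simp only [hDdef]
    push_cast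
    linarith
  have hDk : ∀ k : ℕ, (k : ℝ) ≤ D k := by
    intro k
    simp only [hDdef]
    linarith [hA0 (k : ℝ)]
  have hDneed : ∀ k, need k ≤ D k := by
    intro k
    simp only [hDdef]
    linarith [hAf k, (Nat.cast_nonneg k : (0:ℝ) ≤ k)]
  set R : ℝ → ℝ := fun r => A (max r 0 + 2) + (max r 0 + 2) with hRdef
  have hRc : Continuous R :=
    (hAc.comp ((continuous_id.max continuous_const).add continuous_const)).add
      ((continuous_id.max continuous_const).add continuous_const)
  have hRm : Monotone R := by
    intro x y hxy
    have h1 : max x 0 + 2 ≤ max y 0 + 2 := by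
      have := max_le_max hxy (le_refl (0:ℝ)); linarith
    simp only [hRdef]
    exact add_le_add (hAm h1) h1
  have hRD : ∀ r : ℝ, D ⌈max r 1⌉₊ ≤ R r := by
    intro r
    have hκx : ((⌈max r 1⌉₊ : ℝ)) ≤ max r 0 + 2 := by
      have h1 : (0:ℝ) ≤ max r 1 := le_trans zero_le_one (le_max_right r 1)
      have h2 := Nat.ceil_lt_add_one h1
      have h3 : max r 1 ≤ max r 0 + 1 := by
        rcases le_total r 1 with h | h
        · rw [max_eq_right h]
          have : (0:ℝ) ≤ max r 0 := le_max_right r 0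
          linarith
        · rw [max_eq_left h]
          have : r ≤ max r 0 := le_max_left r 0
          linarith
      linarith
    simp only [hDdef, hRdef]
    exact add_le_add (hAm hκx) hκx
  have hR0 : ∀ r, 0 ≤ R r := by
    intro r
    simp only [hRdef]
    have h1 : (0:ℝ) ≤ max r 0 := le_max_right r 0
    linarith [hA0 (max r 0 + 2)]
  -- the KL function
  set β : ℝ → ℝ → ℝ := fun r t =>
    min r (Prop1cAux.Phi D (max (t - R r) 0) + r * max (1 - max (t - R r) 0) 0)
      + r * Real.exp (-t) with hβdef
  have hXnonneg : ∀ r t : ℝ, 0 ≤ r →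
      0 ≤ Prop1cAux.Phi D (max (t - R r) 0) + r * max (1 - max (t - R r) 0) 0 :=
    fun r t hr => add_nonneg (Prop1cAux.phi_nonneg _)
      (mul_nonneg hr (le_max_right _ _))
  refine ⟨β, ⟨?_, ?_, ?_, ?_, ?_⟩, ?_⟩
  · -- continuity
    have hU : Continuous (fun q : ℝ × ℝ => max (q.2 - R q.1) 0) :=
      (continuous_snd.sub (hRc.comp continuous_fst)).max continuous_const
    have : Continuous (fun q : ℝ × ℝ => β q.1 q.2) := by
      apply Continuous.add
      · apply Continuous.min continuous_fst
        apply Continuous.add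
        · exact Prop1cAux.phi_continuous.comp hU
        · exact continuous_fst.mul ((continuous_const.sub hU).max continuous_const)
      · exact continuous_fst.mul (Real.continuous_exp.comp continuous_snd.neg)
    exact this.continuousOn
  · -- nonneg
    intro r t hr ht
    simp only [hβdef]
    have h1 : 0 ≤ min r (Prop1cAux.Phi D (max (t - R r) 0)
        + r * max (1 - max (t - R r) 0) 0) := le_min hr (hXnonneg r t hr)
    have h2 : 0 ≤ r * Real.exp (-t) := mul_nonneg hr (Real.exp_pos _).le
    linarith
  · -- strict mono in r, and zero at zero
    intro t ht
    constructor
    · intro r1 h1 r2 h2 h12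
      simp only [hβdef]
      have hU21 : max (t - R r2) 0 ≤ max (t - R r1) 0 :=
        max_le_max (by linarith [hRm h12.le]) le_rfl
      have hmin : min r1 (Prop1cAux.Phi D (max (t - R r1) 0)
            + r1 * max (1 - max (t - R r1) 0) 0)
          ≤ min r2 (Prop1cAux.Phi D (max (t - R r2) 0)
            + r2 * max (1 - max (t - R r2) 0) 0) := by
        apply min_le_min h12.le
        apply add_le_add
        · exact Prop1cAux.phi_anti hDgap hU21
        · apply mul_le_mul h12.le (max_le_max (by linarith) le_rfl)
            (le_max_right _ _) (le_trans h1 h12.le)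
      have hexp : r1 * Real.exp (-t) < r2 * Real.exp (-t) :=
        mul_lt_mul_of_pos_right h12 (Real.exp_pos _)
      exact add_lt_add_of_le_of_lt hmin hexp
    · simp only [hβdef]
      rw [min_eq_left (hXnonneg 0 t le_rfl), zero_mul, add_zero]
  · -- strict decrease in t
    intro r hr t1 t2 ht1 h12 hpos
    rcases hr.eq_or_lt with h | h
    · exfalso
      have : β r t1 = 0 := by
        simp only [hβdef, ← h]
        rw [min_eq_left (hXnonneg 0 t1 le_rfl), zero_mul, add_zero]
      rw [this] at hpos
      exact lt_irrefl 0 hpos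
    · simp only [hβdef]
      have hU12 : max (t1 - R r) 0 ≤ max (t2 - R r) 0 :=
        max_le_max (by linarith) le_rfl
      have hmin : min r (Prop1cAux.Phi D (max (t2 - R r) 0)
            + r * max (1 - max (t2 - R r) 0) 0)
          ≤ min r (Prop1cAux.Phi D (max (t1 - R r) 0)
            + r * max (1 - max (t1 - R r) 0) 0) := by
        apply min_le_min le_rfl
        apply add_le_add
        · exact Prop1cAux.phi_anti hDgap hU12
        · exact mul_le_mul_of_nonneg_left (max_le_max (by linarith) le_rfl) hr
      have hexp : r * Real.exp (-t2) < r * Real.exp (-t1) := by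
        apply mul_lt_mul_of_pos_left _ h
        exact Real.exp_lt_exp.2 (by linarith)
      exact add_lt_add_of_le_of_lt hmin hexp
  · -- tendsto 0
    intro r hr
    simp only [hβdef]
    have hUt : Filter.Tendsto (fun t => max (t - R r) 0) Filter.atTop Filter.atTop := by
      apply Filter.tendsto_atTop_mono (fun t => le_max_left (t - R r) 0)
      exact Filter.tendsto_atTop_add_const_right _ _ Filter.tendsto_id
    have h1 : Filter.Tendsto (fun t => Prop1cAux.Phi D (max (t - R r) 0))
        Filter.atTop (nhds 0) := (Prop1cAux.phi_tendsto hDgap hDk).comp hUt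
    have h2 : Filter.Tendsto (fun t => r * max (1 - max (t - R r) 0) 0)
        Filter.atTop (nhds 0) := by
      have hev : ∀ᶠ t in Filter.atTop, r * max (1 - max (t - R r) 0) 0 = 0 := by
        filter_upwards [hUt.eventually (Filter.eventually_ge_atTop 1)] with t htt
        rw [max_eq_right (by linarith), mul_zero]
      exact Filter.Tendsto.congr' (Filter.EventuallyEq.symm hev) tendsto_const_nhds
    have h3 : Filter.Tendsto (fun t => min r (Prop1cAux.Phi D (max (t - R r) 0)
        + r * max (1 - max (t - R r) 0) 0)) Filter.atTop (nhds 0) := by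
      apply squeeze_zero (fun t => le_min hr (hXnonneg r t hr))
        (fun t => min_le_right _ _)
      simpa using h1.add h2
    have h4 : Filter.Tendsto (fun t : ℝ => r * Real.exp (-t)) Filter.atTop (nhds 0) := by
      have := Real.tendsto_exp_neg_atTop_nhds_zero.const_mul r
      simpa using this
    simpa using h3.add h4
  · -- the bound
    intro γ hγ t0 ht0 z0 hz0 T z sol t ht htT
    have hγ' : IsImpulseSeq γ := hγ
    set s : ℝ := t - t0 + ((γ ∩ Set.Ioc t0 t).ncard : ℝ) with hsdef
    have hyr : z t ≤ z0 := by
      have := Prop1cAux.sol_mono hφ hp hψlt hψ0 hγ' sol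
        ((γ ∩ Set.Ioc t0 t).ncard) t0 t le_rfl ht htT le_rfl
      rw [sol.init] at this
      exact this
    have Hj : ∀ j : ℕ, 1 ≤ j → z0 ≤ (j : ℝ) → D j ≤ s → z t ≤ 1 / (j : ℝ) := by
      intro j hj hz0j hDs
      exact hneed j hj γ hγ' t0 ht0 z0 hz0 hz0j T z sol t ht htT
        (le_trans (hDneed j) hDs)
    have hkl := Prop1cAux.kl_bound hDgap hDk hRD hR0 hz0 hyr Hj
    have himp : (impCnt γ t0 t : ℝ) = ((γ ∩ Set.Ioc t0 t).ncard : ℝ) := rfl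
    show z t ≤ β z0 (t - t0 + (((γ ∩ Set.Ioc t0 t).ncard : ℕ) : ℝ))
    simp only [hβdef]
    rw [← hsdef]
    have hexp : 0 ≤ z0 * Real.exp (-s) := mul_nonneg hz0 (Real.exp_pos _).le
    linarith [hkl]
end
end
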